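/- arXiv:2212.05431 — 5 statements merged into one kernel-verified Lean document; each statement's English description precedes it below -/
import Mathlib

section
/- Let φ = (φ_1, …, φ_n) be random variables on a probability space with A_k ≤ φ_k ≤ B_k almost surely, where A_k < 0 < B_k, let d ≤ n be a positive integer, and let G : ℝ^n → [0, ∞) be convex in each variable separately. Then there exist a probability space and random variables ξ_1, …, ξ_n on it such that each ξ_k takes only the two values A_k and B_k, has mean zero, any d of the ξ_k are mutually independent, and E[G(φ_1, …, φ_n)] ≤ (1 + μ_d(φ)) · E[G(ξ_1, …, ξ_n)]. -/
open MeasureTheory ProbabilityTheory Finset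

namespace ExtremeAux

variable {n : ℕ}

/-- the extreme value at coordinate `k` encoded by a boolean -/
noncomputable def vv (a b : Fin n → ℝ) (k : Fin n) (c : Bool) : ℝ := if c then b k else a k

/-- the convex weight of the extreme value `vv a b k c` for the point `t` -/
noncomputable def ww (a b : Fin n → ℝ) (k : Fin n) (c : Bool) (t : ℝ) : ℝ :=
  if c then (t - a k) / (b k - a k) else (b k - t) / (b k - a k)

lemma ww_add {a b : Fin n → ℝ} (hab : ∀ k, a k < b k) (k : Fin n) (t : ℝ) :
    ww a b k false t + ww a b k true t = 1 := by
  have h : b k - a k ≠ 0 := sub_ne_zero.2 (hab k).ne'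
  simp only [ww, Bool.false_eq_true, if_true, if_false]
  field_simp
  ring

lemma ww_vv {a b : Fin n → ℝ} (hab : ∀ k, a k < b k) (k : Fin n) (t : ℝ) :
    ww a b k false t * vv a b k false + ww a b k true t * vv a b k true = t := by
  have h : b k - a k ≠ 0 := sub_ne_zero.2 (hab k).ne'
  simp only [ww, vv, Bool.false_eq_true, if_true, if_false]
  field_simp
  ring

lemma ww_nonneg {a b : Fin n → ℝ} (hab : ∀ k, a k < b k) (k : Fin n) (c : Bool) {t : ℝ}
    (h1 : a k ≤ t) (h2 : t ≤ b k) : 0 ≤ ww a b k c t := by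
  have h : (0:ℝ) < b k - a k := sub_pos.2 (hab k)
  have h1' : (0:ℝ) ≤ t - a k := sub_nonneg.2 h1
  have h2' : (0:ℝ) ≤ b k - t := sub_nonneg.2 h2
  cases c <;> simp only [ww, Bool.false_eq_true, if_true, if_false] <;>
    exact div_nonneg (by assumption) h.le

/-- sums over the boolean cube of products factor through coordinates -/
lemma sum_cube_prod (f : Fin n → Bool → ℝ) :
    ∑ ε : Fin n → Bool, ∏ k, f k (ε k) = ∏ k, (f k false + f k true) := by
  have h := Finset.prod_univ_sum (fun _ : Fin n => (Finset.univ : Finset Bool)) f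
  simp only [Fintype.piFinset_univ] at h
  rw [← h]
  congr 1
  ext k
  simp [Fintype.sum_bool, add_comm]

lemma update_funSplitAt (j : Fin n) (c c' : Bool) (r : { i : Fin n // i ≠ j } → Bool) :
    Function.update ((Equiv.funSplitAt j Bool).symm (c', r)) j c
      = (Equiv.funSplitAt j Bool).symm (c, r) := by
  funext i
  rcases eq_or_ne i j with rfl | h
  · simp [Equiv.funSplitAt, Equiv.piSplitAt]
  · simp [Function.update, h, Equiv.funSplitAt, Equiv.piSplitAt, dif_neg h]

lemma sum_update (g : (Fin n → Bool) → ℝ) (j : Fin n) (c : Bool) :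
    ∑ ε : Fin n → Bool, g (Function.update ε j c)
      = 2 * ∑ r : { i : Fin n // i ≠ j } → Bool, g ((Equiv.funSplitAt j Bool).symm (c, r)) := by
  rw [← Equiv.sum_comp (Equiv.funSplitAt j Bool).symm
    (fun ε => g (Function.update ε j c))]
  rw [Fintype.sum_prod_type]
  simp only [update_funSplitAt]
  rw [Fintype.sum_bool, two_mul]

lemma sum_halve (g : (Fin n → Bool) → ℝ) (j : Fin n) :
    ∑ ε : Fin n → Bool, g ε
      = 2⁻¹ * ((∑ ε : Fin n → Bool, g (Function.update ε j true))
          + ∑ ε : Fin n → Bool, g (Function.update ε j false)) := by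
  rw [sum_update, sum_update]
  rw [← Equiv.sum_comp (Equiv.funSplitAt j Bool).symm g, Fintype.sum_prod_type,
    Fintype.sum_bool]
  ring


noncomputable def pp (a b : Fin n → ℝ) (k : Fin n) (c : Bool) : ℝ := ww a b k c 0
noncomputable def th (a b : Fin n → ℝ) (k : Fin n) (c : Bool) : ℝ :=
  (if c then 1 else -1) / (b k - a k)


lemma cube_bound {a b : Fin n → ℝ} (hab : ∀ k, a k < b k)
    (G : (Fin n → ℝ) → ℝ)
    (hGconv : ∀ (k : Fin n) (x : Fin n → ℝ),
      ConvexOn ℝ Set.univ (fun t : ℝ => G (Function.update x k t)))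
    (t : Fin n → ℝ) (ht : ∀ k, a k ≤ t k ∧ t k ≤ b k) :
    G t ≤ ∑ ε : Fin n → Bool, (∏ k, ww a b k (ε k) (t k)) * G (fun k => vv a b k (ε k)) := by
  classical
  have key : ∀ s : Finset (Fin n), G t ≤ ∑ ε : Fin n → Bool,
      ((∏ k ∈ s, ww a b k (ε k) (t k)) * ∏ _k ∈ sᶜ, (2:ℝ)⁻¹) *
        G (fun k => if k ∈ s then vv a b k (ε k) else t k) := by
    intro s
    induction s using Finset.induction_on with
    | empty =>
      simp only [Finset.prod_empty, one_mul, Finset.compl_empty, Finset.notMem_empty,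
        if_false]
      rw [Finset.sum_const, Finset.prod_const, Finset.card_univ, Finset.card_univ]
      have hcard : Fintype.card (Fin n → Bool) = 2 ^ n := by
        simp [Fintype.card_fun]
      rw [hcard, nsmul_eq_mul, Fintype.card_fin]
      have hGt : (fun k => t k) = t := rfl
      rw [hGt, Nat.cast_pow, Nat.cast_ofNat, ← mul_assoc, ← mul_pow]
      norm_num
    | @insert j s hj ih =>
      set W : (Fin n → Bool) → ℝ :=
        fun ε => (∏ k ∈ s, ww a b k (ε k) (t k)) * ∏ _k ∈ sᶜ, (2:ℝ)⁻¹ with hW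
      set Y : (Fin n → Bool) → (Fin n → ℝ) :=
        fun ε => fun k => if k ∈ s then vv a b k (ε k) else t k with hY
      -- convexity at coordinate j
      have conv : ∀ ε : Fin n → Bool, G (Y ε) ≤
          ww a b j true (t j) * G (Function.update (Y ε) j (b j))
            + ww a b j false (t j) * G (Function.update (Y ε) j (a j)) := by
        intro ε
        have hc := (hGconv j (Y ε)).2 (Set.mem_univ (b j)) (Set.mem_univ (a j))
          (ww_nonneg hab j true (ht j).1 (ht j).2)
          (ww_nonneg hab j false (ht j).1 (ht j).2)
          (by rw [add_comm]; exact ww_add hab j (t j))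
        have harg : ww a b j true (t j) • b j + ww a b j false (t j) • a j = t j := by
          have := ww_vv hab j (t j)
          simp only [vv, Bool.false_eq_true, if_true, if_false] at this
          simp only [smul_eq_mul]
          linarith
        rw [harg] at hc
        have hYt : Function.update (Y ε) j (t j) = Y ε := by
          funext k
          rcases eq_or_ne k j with rfl | h
          · simp [hY, hj]
          · simp [Function.update, h]
        simp only [smul_eq_mul] at hc
        rw [hYt] at hc
        exact hc
      -- nonnegativity of weights
      have hWnn : ∀ ε, 0 ≤ W ε := by
        intro ε
        apply mul_nonneg
        · exact Finset.prod_nonneg fun k _ => ww_nonneg hab k (ε k) (ht k).1 (ht k).2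
        · exact Finset.prod_nonneg fun k _ => by norm_num
      -- identify the RHS for `insert j s`
      have hsc : sᶜ = insert j (insert j s)ᶜ := by
        ext x
        rcases eq_or_ne x j with rfl | h
        · simp [hj]
        · simp [h]
      have hjc : j ∉ (insert j s)ᶜ := by simp
      have hprodc : (∏ _k ∈ sᶜ, (2:ℝ)⁻¹) = 2⁻¹ * ∏ _k ∈ (insert j s)ᶜ, (2:ℝ)⁻¹ := by
        rw [hsc, Finset.prod_insert hjc]
      set F : (Fin n → Bool) → ℝ :=
        fun ε => ((∏ k ∈ insert j s, ww a b k (ε k) (t k)) * ∏ _k ∈ (insert j s)ᶜ, (2:ℝ)⁻¹) *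
          G (fun k => if k ∈ insert j s then vv a b k (ε k) else t k) with hF
      have hFup : ∀ (c : Bool) (ε : Fin n → Bool),
          F (Function.update ε j c)
            = 2 * (ww a b j c (t j) * (W ε * G (Function.update (Y ε) j (vv a b j c)))) := by
        intro c ε
        have h1 : (∏ k ∈ insert j s, ww a b k ((Function.update ε j c) k) (t k))
            = ww a b j c (t j) * ∏ k ∈ s, ww a b k (ε k) (t k) := by
          rw [Finset.prod_insert hj, Function.update_self]
          congr 1
          refine Finset.prod_congr rfl fun k hk => ?_
          rw [Function.update_of_ne (ne_of_mem_of_not_mem hk hj) c ε]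
        have h2 : (fun k => if k ∈ insert j s then vv a b k ((Function.update ε j c) k) else t k)
            = Function.update (Y ε) j (vv a b j c) := by
          funext k
          rcases eq_or_ne k j with rfl | h
          · simp [Function.update_self]
          · rw [Function.update_of_ne h c ε, Function.update_of_ne h _ (Y ε)]
            simp [hY, Finset.mem_insert, h]
        rw [hF]
        simp only [h1, h2]
        have h3 : (∏ _k ∈ (insert j s)ᶜ, (2:ℝ)⁻¹) = 2 * ∏ _k ∈ sᶜ, (2:ℝ)⁻¹ := by
          rw [hprodc]; ring
        rw [h3, hW]
        ring
      calc G t ≤ ∑ ε : Fin n → Bool, W ε * G (Y ε) := ih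
        _ ≤ ∑ ε : Fin n → Bool, W ε *
            (ww a b j true (t j) * G (Function.update (Y ε) j (b j))
              + ww a b j false (t j) * G (Function.update (Y ε) j (a j))) := by
            apply Finset.sum_le_sum
            intro ε _
            exact mul_le_mul_of_nonneg_left (conv ε) (hWnn ε)
        _ = ∑ ε : Fin n → Bool, F ε := by
            rw [sum_halve F j]
            have hbv : vv a b j true = b j := by simp [vv]
            have hav : vv a b j false = a j := by simp [vv]
            simp only [hFup, hbv, hav]
            rw [← Finset.sum_add_distrib, Finset.mul_sum]
            exact Finset.sum_congr rfl fun ε _ => by ring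
      done
  have h := key Finset.univ
  simpa using h

lemma pp_nonneg {a b : Fin n → ℝ} (ha : ∀ k, a k < 0) (hb : ∀ k, 0 < b k) (k : Fin n)
    (c : Bool) : 0 ≤ pp a b k c :=
  ww_nonneg (fun k => (ha k).trans (hb k)) k c (ha k).le (hb k).le

/-- a two-point weighted sum of a coordinate function, used everywhere below -/
lemma cube_moment {a b : Fin n → ℝ} (hab : ∀ k, a k < b k) (x : Fin n → ℝ)
    (B : Finset (Fin n)) :
    ∑ ε : Fin n → Bool, (∏ k, ww a b k (ε k) (x k)) * ∏ k ∈ B, vv a b k (ε k)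
      = ∏ k ∈ B, x k := by
  classical
  have h1 : ∀ ε : Fin n → Bool,
      (∏ k, ww a b k (ε k) (x k)) * ∏ k ∈ B, vv a b k (ε k)
        = ∏ k, (ww a b k (ε k) (x k) * (if k ∈ B then vv a b k (ε k) else 1)) := by
    intro ε
    rw [Finset.prod_mul_distrib, Finset.prod_ite_mem, Finset.univ_inter]
  rw [Finset.sum_congr rfl fun ε _ => h1 ε]
  rw [sum_cube_prod (fun k c => ww a b k c (x k) * (if k ∈ B then vv a b k c else 1))]
  conv_rhs => rw [← Finset.univ_inter B, ← Finset.prod_ite_mem]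
  refine Finset.prod_congr rfl fun k _ => ?_
  by_cases hk : k ∈ B
  · simp only [hk, if_true]
    exact ww_vv hab k (x k)
  · simp only [hk, if_false, mul_one]
    exact ww_add hab k (x k)

/-- orthogonality of the signed basis against coordinate products -/
lemma cube_orth {a b : Fin n → ℝ} (hab : ∀ k, a k < b k) (A B : Finset (Fin n)) :
    ∑ ε : Fin n → Bool,
        (∏ k, (if k ∈ A then th a b k (ε k) else pp a b k (ε k)))
          * ∏ k ∈ B, vv a b k (ε k)
      = if A = B then 1 else 0 := by
  classical
  have h1 : ∀ ε : Fin n → Bool,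
      (∏ k, (if k ∈ A then th a b k (ε k) else pp a b k (ε k))) * ∏ k ∈ B, vv a b k (ε k)
        = ∏ k, ((if k ∈ A then th a b k (ε k) else pp a b k (ε k))
            * (if k ∈ B then vv a b k (ε k) else 1)) := by
    intro ε
    rw [Finset.prod_mul_distrib, Finset.prod_ite_mem, Finset.univ_inter]
  rw [Finset.sum_congr rfl fun ε _ => h1 ε]
  rw [sum_cube_prod (fun k c => (if k ∈ A then th a b k c else pp a b k c)
    * (if k ∈ B then vv a b k c else 1))]
  have hba : ∀ k, b k - a k ≠ 0 := fun k => sub_ne_zero.2 (hab k).ne'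
  -- per-coordinate values
  have hcoord : ∀ k : Fin n,
      ((if k ∈ A then th a b k false else pp a b k false) * (if k ∈ B then vv a b k false else 1))
        + ((if k ∈ A then th a b k true else pp a b k true) * (if k ∈ B then vv a b k true else 1))
      = if k ∈ A then (if k ∈ B then 1 else 0) else (if k ∈ B then 0 else 1) := by
    intro k
    by_cases hA : k ∈ A <;> by_cases hB : k ∈ B <;>
      simp only [hA, hB, if_true, if_false, mul_one]
    · -- th * vv sums to 1
      simp only [th, vv, Bool.false_eq_true, if_true, if_false]
      rw [div_mul_eq_mul_div, div_mul_eq_mul_div, ← add_div,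
        div_eq_one_iff_eq (hba k)]
      ring
    · -- th sums to 0
      simp only [th, Bool.false_eq_true, if_true, if_false]
      field_simp
      ring
    · -- pp * vv sums to 0
      have := ww_vv hab k 0
      simpa [pp] using this
    · -- pp sums to 1
      have := ww_add hab k 0
      simpa [pp] using this
  rw [Finset.prod_congr rfl fun k _ => hcoord k]
  by_cases hAB : A = B
  · subst hAB
    rw [if_pos rfl]
    refine Finset.prod_eq_one fun k _ => ?_
    by_cases hk : k ∈ A <;> simp [hk]
  · rw [if_neg hAB]
    obtain ⟨k0, hk0⟩ := Finset.symmDiff_nonempty.2 hAB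
    refine Finset.prod_eq_zero (Finset.mem_univ k0) ?_
    rcases Finset.mem_symmDiff.1 hk0 with ⟨h1, h2⟩ | ⟨h1, h2⟩ <;> simp [h1, h2]


lemma ww_le_one {a b : Fin n → ℝ} (hab : ∀ k, a k < b k) (k : Fin n) (c : Bool) {t : ℝ}
    (h1 : a k ≤ t) (h2 : t ≤ b k) : ww a b k c t ≤ 1 := by
  have h : (0:ℝ) < b k - a k := sub_pos.2 (hab k)
  cases c <;> simp only [ww, Bool.false_eq_true, if_true, if_false] <;>
    rw [div_le_one h] <;> linarith


section Meas
variable {Ω : Type*} [MeasurableSpace Ω] (μ : Measure Ω) [IsProbabilityMeasure μ]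
variable (a b : Fin n → ℝ) (φ : Fin n → Ω → ℝ) (d : ℕ)

/-- the candidate weight of the extreme point `ε` -/
noncomputable def lam (ε : Fin n → Bool) : ℝ := ∫ ω, ∏ k, ww a b k (ε k) (φ k ω) ∂μ

/-- the index set of small nonempty subsets -/
noncomputable def idx : Finset (Finset (Fin n)) :=
  Finset.univ.filter (fun A : Finset (Fin n) => A.Nonempty ∧ A.card ≤ d)

/-- the multiplicative error -/
noncomputable def mud : ℝ :=
  ∑ A ∈ idx (n := n) d, (∏ j ∈ A, (min (-(a j)) (b j))⁻¹) * |∫ ω, ∏ j ∈ A, φ j ω ∂μ|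

/-- the low-order correction -/
noncomputable def DD (ε : Fin n → Bool) : ℝ :=
  ∑ A ∈ idx (n := n) d, (∫ ω, ∏ j ∈ A, φ j ω ∂μ) *
    ∏ k, (if k ∈ A then th a b k (ε k) else pp a b k (ε k))

/-- the final discrete distribution on the cube -/
noncomputable def nu (ε : Fin n → Bool) : ℝ :=
  (lam μ a b φ ε + mud μ a b φ d * ∏ k, pp a b k (ε k) - DD μ a b φ d ε)
    / (1 + mud μ a b φ d)




variable {μ a b φ d}

lemma meas_prod_ww (hφmeas : ∀ k, Measurable (φ k)) (ε : Fin n → Bool) :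
    Measurable (fun ω => ∏ k, ww a b k (ε k) (φ k ω)) := by
  apply Finset.measurable_prod
  intro k _
  cases hε : ε k <;> simp only [ww, Bool.false_eq_true, if_true, if_false]
  · exact (measurable_const.sub (hφmeas k)).div_const _
  · exact ((hφmeas k).sub measurable_const).div_const _

lemma ae_box (hbound : ∀ k, ∀ᵐ ω ∂μ, a k ≤ φ k ω ∧ φ k ω ≤ b k) :
    ∀ᵐ ω ∂μ, ∀ k, a k ≤ φ k ω ∧ φ k ω ≤ b k := ae_all_iff.2 hbound

lemma intble_prod_ww (hab : ∀ k, a k < b k) (hφmeas : ∀ k, Measurable (φ k))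
    (hbound : ∀ k, ∀ᵐ ω ∂μ, a k ≤ φ k ω ∧ φ k ω ≤ b k) (ε : Fin n → Bool) :
    Integrable (fun ω => ∏ k, ww a b k (ε k) (φ k ω)) μ := by
  refine Integrable.mono' (integrable_const (1:ℝ))
    (meas_prod_ww hφmeas ε).aestronglyMeasurable ?_
  filter_upwards [ae_box hbound] with ω hω
  rw [Real.norm_eq_abs, abs_of_nonneg
    (Finset.prod_nonneg fun k _ => ww_nonneg hab k (ε k) (hω k).1 (hω k).2)]
  exact Finset.prod_le_one
    (fun k _ => ww_nonneg hab k (ε k) (hω k).1 (hω k).2)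
    (fun k _ => ww_le_one hab k (ε k) (hω k).1 (hω k).2)

lemma lam_nonneg (hab : ∀ k, a k < b k) (hφmeas : ∀ k, Measurable (φ k))
    (hbound : ∀ k, ∀ᵐ ω ∂μ, a k ≤ φ k ω ∧ φ k ω ≤ b k) (ε : Fin n → Bool) :
    0 ≤ lam μ a b φ ε := by
  apply integral_nonneg_of_ae
  filter_upwards [ae_box hbound] with ω hω
  exact Finset.prod_nonneg fun k _ => ww_nonneg hab k (ε k) (hω k).1 (hω k).2

lemma lam_moment (hab : ∀ k, a k < b k) (hφmeas : ∀ k, Measurable (φ k))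
    (hbound : ∀ k, ∀ᵐ ω ∂μ, a k ≤ φ k ω ∧ φ k ω ≤ b k) (B : Finset (Fin n)) :
    ∑ ε : Fin n → Bool, lam μ a b φ ε * ∏ k ∈ B, vv a b k (ε k)
      = ∫ ω, ∏ j ∈ B, φ j ω ∂μ := by
  have h1 : ∀ ε : Fin n → Bool,
      lam μ a b φ ε * ∏ k ∈ B, vv a b k (ε k)
        = ∫ ω, (∏ k, ww a b k (ε k) (φ k ω)) * ∏ k ∈ B, vv a b k (ε k) ∂μ := by
    intro ε
    rw [lam, ← integral_mul_const]
  rw [Finset.sum_congr rfl fun ε _ => h1 ε]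
  rw [← integral_finset_sum _ (fun ε _ => (intble_prod_ww hab hφmeas hbound ε).mul_const _)]
  apply integral_congr_ae
  filter_upwards with ω
  exact cube_moment hab (fun k => φ k ω) B

lemma integral_G_le (hab : ∀ k, a k < b k) (hφmeas : ∀ k, Measurable (φ k))
    (hbound : ∀ k, ∀ᵐ ω ∂μ, a k ≤ φ k ω ∧ φ k ω ≤ b k)
    (G : (Fin n → ℝ) → ℝ) (hG0 : ∀ t, 0 ≤ G t)
    (hGconv : ∀ (k : Fin n) (x : Fin n → ℝ),
      ConvexOn ℝ Set.univ (fun t : ℝ => G (Function.update x k t))) :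
    ∫ ω, G (fun k => φ k ω) ∂μ
      ≤ ∑ ε : Fin n → Bool, lam μ a b φ ε * G (fun k => vv a b k (ε k)) := by
  by_cases hInt : Integrable (fun ω => G (fun k => φ k ω)) μ
  · have hRint : ∀ ε : Fin n → Bool, Integrable
        (fun ω => (∏ k, ww a b k (ε k) (φ k ω)) * G (fun k => vv a b k (ε k))) μ :=
      fun ε => (intble_prod_ww hab hφmeas hbound ε).mul_const _
    calc ∫ ω, G (fun k => φ k ω) ∂μ
        ≤ ∫ ω, ∑ ε : Fin n → Bool,
            (∏ k, ww a b k (ε k) (φ k ω)) * G (fun k => vv a b k (ε k)) ∂μ := by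
          apply integral_mono_ae hInt (integrable_finset_sum _ fun ε _ => hRint ε)
          filter_upwards [ae_box hbound] with ω hω
          exact cube_bound hab G hGconv (fun k => φ k ω) hω
      _ = ∑ ε : Fin n → Bool, lam μ a b φ ε * G (fun k => vv a b k (ε k)) := by
          rw [integral_finset_sum _ fun ε _ => hRint ε]
          exact Finset.sum_congr rfl fun ε _ => by rw [lam, integral_mul_const]
  · rw [integral_undef hInt]
    exact Finset.sum_nonneg fun ε _ =>
      mul_nonneg (lam_nonneg hab hφmeas hbound ε) (hG0 _)

lemma hC_pos (ha : ∀ k, a k < 0) (hb : ∀ k, 0 < b k) (k : Fin n) :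
    0 < min (-(a k)) (b k) := lt_min (neg_pos.2 (ha k)) (hb k)

lemma mud_nonneg (ha : ∀ k, a k < 0) (hb : ∀ k, 0 < b k) : 0 ≤ mud μ a b φ d :=
  Finset.sum_nonneg fun A _ => mul_nonneg
    (Finset.prod_nonneg fun j _ => inv_nonneg.2 (hC_pos ha hb j).le) (abs_nonneg _)

lemma one_add_mud_pos (ha : ∀ k, a k < 0) (hb : ∀ k, 0 < b k) :
    0 < 1 + mud μ a b φ d := by linarith [mud_nonneg (μ := μ) (φ := φ) (d := d) ha hb]

lemma th_abs_le (ha : ∀ k, a k < 0) (hb : ∀ k, 0 < b k) (k : Fin n) (c : Bool) :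
    |th a b k c| ≤ (min (-(a k)) (b k))⁻¹ * pp a b k c := by
  have hab : a k < b k := (ha k).trans (hb k)
  have hba : (0:ℝ) < b k - a k := sub_pos.2 hab
  have hC := hC_pos ha hb k
  have habs : |th a b k c| = (b k - a k)⁻¹ := by
    cases c <;> simp [th, abs_div, abs_of_pos hba, hab.le]
  rw [habs]
  have hpp : min (-(a k)) (b k) / (b k - a k) ≤ pp a b k c := by
    cases c
    · simp only [pp, ww, Bool.false_eq_true, if_false]
      rw [div_le_div_iff_of_pos_right hba, sub_zero]
      exact min_le_right _ _
    · simp only [pp, ww, if_true]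
      rw [div_le_div_iff_of_pos_right hba, zero_sub]
      exact min_le_left _ _
  calc (b k - a k)⁻¹ = (min (-(a k)) (b k))⁻¹ * (min (-(a k)) (b k) / (b k - a k)) := by
        field_simp
    _ ≤ (min (-(a k)) (b k))⁻¹ * pp a b k c :=
        mul_le_mul_of_nonneg_left hpp (inv_nonneg.2 hC.le)

lemma DD_abs_le (ha : ∀ k, a k < 0) (hb : ∀ k, 0 < b k) (ε : Fin n → Bool) :
    |DD μ a b φ d ε| ≤ mud μ a b φ d * ∏ k, pp a b k (ε k) := by
  calc |DD μ a b φ d ε|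
      ≤ ∑ A ∈ idx (n := n) d, |∫ ω, ∏ j ∈ A, φ j ω ∂μ| *
          ∏ k, |if k ∈ A then th a b k (ε k) else pp a b k (ε k)| := by
        refine (Finset.abs_sum_le_sum_abs _ _).trans ?_
        refine Finset.sum_le_sum fun A _ => ?_
        rw [abs_mul, Finset.abs_prod]
    _ ≤ ∑ A ∈ idx (n := n) d, |∫ ω, ∏ j ∈ A, φ j ω ∂μ| *
          ((∏ j ∈ A, (min (-(a j)) (b j))⁻¹) * ∏ k, pp a b k (ε k)) := by
        refine Finset.sum_le_sum fun A _ => ?_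
        refine mul_le_mul_of_nonneg_left ?_ (abs_nonneg _)
        have step1 : ∏ k, |if k ∈ A then th a b k (ε k) else pp a b k (ε k)|
            ≤ ∏ k, (if k ∈ A then (min (-(a k)) (b k))⁻¹ else 1) * pp a b k (ε k) := by
          refine Finset.prod_le_prod (fun k _ => abs_nonneg _) fun k _ => ?_
          by_cases hk : k ∈ A
          · simp only [hk, if_true]
            exact th_abs_le ha hb k (ε k)
          · simp only [hk, if_false, one_mul]
            rw [abs_of_nonneg (pp_nonneg ha hb k (ε k))]
        refine step1.trans ?_
        rw [Finset.prod_mul_distrib, Finset.prod_ite_mem, Finset.univ_inter]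
    _ = mud μ a b φ d * ∏ k, pp a b k (ε k) := by
        rw [mud, Finset.sum_mul]
        exact Finset.sum_congr rfl fun A _ => by ring

lemma nu_nonneg (ha : ∀ k, a k < 0) (hb : ∀ k, 0 < b k)
    (hφmeas : ∀ k, Measurable (φ k))
    (hbound : ∀ k, ∀ᵐ ω ∂μ, a k ≤ φ k ω ∧ φ k ω ≤ b k) (ε : Fin n → Bool) :
    0 ≤ nu μ a b φ d ε := by
  have hab : ∀ k, a k < b k := fun k => (ha k).trans (hb k)
  have h1 := lam_nonneg hab hφmeas hbound ε
  have h2 := DD_abs_le (μ := μ) (φ := φ) (d := d) ha hb ε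
  have h3 := abs_le.1 h2
  apply div_nonneg _ (one_add_mud_pos (μ := μ) (φ := φ) (d := d) ha hb).le
  linarith [h3.2]

lemma lam_le_nu (ha : ∀ k, a k < 0) (hb : ∀ k, 0 < b k)
    (hφmeas : ∀ k, Measurable (φ k))
    (hbound : ∀ k, ∀ᵐ ω ∂μ, a k ≤ φ k ω ∧ φ k ω ≤ b k) (ε : Fin n → Bool) :
    lam μ a b φ ε ≤ (1 + mud μ a b φ d) * nu μ a b φ d ε := by
  have h2 := DD_abs_le (μ := μ) (φ := φ) (d := d) ha hb ε
  have h3 := (abs_le.1 h2).2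
  rw [nu, mul_div_cancel₀ _ (one_add_mud_pos (μ := μ) (φ := φ) (d := d) ha hb).ne']
  linarith

/-- the moments of `nu` against products of extreme values -/
lemma nu_moment_eq (ha : ∀ k, a k < 0) (hb : ∀ k, 0 < b k)
    (hφmeas : ∀ k, Measurable (φ k))
    (hbound : ∀ k, ∀ᵐ ω ∂μ, a k ≤ φ k ω ∧ φ k ω ≤ b k) (B : Finset (Fin n)) :
    ∑ ε : Fin n → Bool, nu μ a b φ d ε * ∏ k ∈ B, vv a b k (ε k)
      = ((∫ ω, ∏ j ∈ B, φ j ω ∂μ) + mud μ a b φ d * (if (∅ : Finset (Fin n)) = B then 1 else 0)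
          - (if B ∈ idx (n := n) d then ∫ ω, ∏ j ∈ B, φ j ω ∂μ else 0))
        / (1 + mud μ a b φ d) := by
  classical
  have hab : ∀ k, a k < b k := fun k => (ha k).trans (hb k)
  have expand : ∀ ε : Fin n → Bool, nu μ a b φ d ε * ∏ k ∈ B, vv a b k (ε k)
      = (lam μ a b φ ε * ∏ k ∈ B, vv a b k (ε k)
          + mud μ a b φ d * ((∏ k, pp a b k (ε k)) * ∏ k ∈ B, vv a b k (ε k))
          - DD μ a b φ d ε * ∏ k ∈ B, vv a b k (ε k)) / (1 + mud μ a b φ d) := by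
    intro ε
    rw [nu]
    ring
  rw [Finset.sum_congr rfl fun ε _ => expand ε, ← Finset.sum_div]
  congr 1
  rw [Finset.sum_sub_distrib, Finset.sum_add_distrib, ← Finset.mul_sum]
  congr 1
  · congr 1
    · exact lam_moment hab hφmeas hbound B
    · congr 1
      have h := cube_orth hab (∅ : Finset (Fin n)) B
      simpa using h
  · -- the DD moment
    have swap : ∑ ε : Fin n → Bool, DD μ a b φ d ε * ∏ k ∈ B, vv a b k (ε k)
        = ∑ A ∈ idx (n := n) d, (∫ ω, ∏ j ∈ A, φ j ω ∂μ) *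
            ∑ ε : Fin n → Bool,
              (∏ k, (if k ∈ A then th a b k (ε k) else pp a b k (ε k)))
                * ∏ k ∈ B, vv a b k (ε k) := by
      have e1 : ∀ ε : Fin n → Bool, DD μ a b φ d ε * ∏ k ∈ B, vv a b k (ε k)
          = ∑ A ∈ idx (n := n) d, (∫ ω, ∏ j ∈ A, φ j ω ∂μ) *
              ((∏ k, (if k ∈ A then th a b k (ε k) else pp a b k (ε k)))
                * ∏ k ∈ B, vv a b k (ε k)) := by
        intro ε
        rw [DD, Finset.sum_mul]
        exact Finset.sum_congr rfl fun A _ => by ring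
      rw [Finset.sum_congr rfl fun ε _ => e1 ε, Finset.sum_comm]
      exact Finset.sum_congr rfl fun A _ => by rw [← Finset.mul_sum]
    rw [swap]
    rw [Finset.sum_congr rfl fun A _ => by rw [cube_orth hab A B]]
    by_cases hB : B ∈ idx (n := n) d
    · rw [if_pos hB]
      rw [Finset.sum_eq_single_of_mem B hB (fun A _ hAB => by rw [if_neg hAB, mul_zero])]
      rw [if_pos rfl, mul_one]
    · rw [if_neg hB]
      refine Finset.sum_eq_zero fun A hA => ?_
      rw [if_neg (by rintro rfl; exact hB hA), mul_zero]

end Meas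

/-- products of functions of at most `d` coordinates factorize under a distribution whose
low moments vanish -/
lemma kpl {a b : Fin n → ℝ} (hab : ∀ k, a k < b k) (d : ℕ) (hd : 0 < d)
    (ρ : (Fin n → Bool) → ℝ) (htot : ∑ x : Fin n → Bool, ρ x = 1)
    (hmom : ∀ B : Finset (Fin n), B.Nonempty → B.card ≤ d →
      ∑ x : Fin n → Bool, ρ x * ∏ k ∈ B, vv a b k (x k) = 0)
    (s : Finset (Fin n)) (hs : s.card ≤ d) (g : Fin n → Bool → ℝ) :
    ∑ x : Fin n → Bool, ρ x * ∏ k ∈ s, g k (x k)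
      = ∏ k ∈ s, ∑ x : Fin n → Bool, ρ x * g k (x k) := by
  classical
  have hba : ∀ k, b k - a k ≠ 0 := fun k => sub_ne_zero.2 (hab k).ne'
  set α : Fin n → ℝ := fun k => (g k false * b k - g k true * a k) / (b k - a k) with hα
  set β : Fin n → ℝ := fun k => (g k true - g k false) / (b k - a k) with hβ
  have hg : ∀ k c, g k c = β k * vv a b k c + α k := by
    intro k c
    simp only [hα, hβ]
    rw [div_mul_eq_mul_div, ← add_div, eq_div_iff (hba k)]
    cases c <;> simp only [vv, Bool.false_eq_true, if_true, if_false] <;> ring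
  have hmom' : ∀ B : Finset (Fin n), B.card ≤ d →
      ∑ x : Fin n → Bool, ρ x * ∏ k ∈ B, vv a b k (x k)
        = if B = ∅ then 1 else 0 := by
    intro B hB
    by_cases hBe : B = ∅
    · subst hBe
      simp [htot]
    · rw [if_neg hBe]
      exact hmom B (Finset.nonempty_of_ne_empty hBe) hB
  -- expand the product
  have expand : ∀ x : Fin n → Bool, ρ x * ∏ k ∈ s, g k (x k)
      = ∑ t ∈ s.powerset,
          ((∏ k ∈ t, β k) * (∏ k ∈ s \ t, α k)) * (ρ x * ∏ k ∈ t, vv a b k (x k)) := by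
    intro x
    rw [Finset.prod_congr rfl fun k _ => hg k (x k), Finset.prod_add, Finset.mul_sum]
    refine Finset.sum_congr rfl fun t _ => ?_
    rw [Finset.prod_mul_distrib]
    ring
  rw [Finset.sum_congr rfl fun x _ => expand x, Finset.sum_comm]
  have eval : ∀ t ∈ s.powerset,
      ∑ x : Fin n → Bool,
          ((∏ k ∈ t, β k) * (∏ k ∈ s \ t, α k)) * (ρ x * ∏ k ∈ t, vv a b k (x k))
        = if t = ∅ then ∏ k ∈ s, α k else 0 := by
    intro t ht
    rw [← Finset.mul_sum, hmom' t (le_trans (Finset.card_le_card (Finset.mem_powerset.1 ht)) hs)]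
    by_cases hte : t = ∅
    · subst hte
      simp
    · rw [if_neg hte, if_neg hte, mul_zero]
  rw [Finset.sum_congr rfl eval,
    Finset.sum_ite_eq' s.powerset (∅ : Finset (Fin n)) (fun _ => ∏ k ∈ s, α k),
    if_pos (Finset.empty_mem_powerset s)]
  refine Finset.prod_congr rfl fun k hk => ?_
  have : ∑ x : Fin n → Bool, ρ x * g k (x k)
      = β k * (∑ x : Fin n → Bool, ρ x * ∏ j ∈ ({k} : Finset (Fin n)), vv a b j (x j))
        + α k * ∑ x : Fin n → Bool, ρ x := by
    rw [Finset.mul_sum, Finset.mul_sum, ← Finset.sum_add_distrib]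
    refine Finset.sum_congr rfl fun x _ => ?_
    rw [hg k (x k), Finset.prod_singleton]
    ring
  rw [this, hmom' {k} (by simpa using Nat.succ_le_of_lt hd), if_neg (Finset.singleton_ne_empty k), htot]
  ring

section Disc
variable {X : Type} [Fintype X] [MeasurableSpace X] [MeasurableSingletonClass X]

/-- the discrete measure with real density `ν` -/
noncomputable def disc (ν : X → ℝ) : Measure X :=
  ∑ x : X, ENNReal.ofReal (ν x) • Measure.dirac x

lemma disc_apply (ν : X → ℝ) (hnn : ∀ x, 0 ≤ ν x) (E : Set X) :
    disc ν E = ENNReal.ofReal (∑ x : X, E.indicator ν x) := by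
  classical
  rw [disc, Measure.finset_sum_apply]
  rw [ENNReal.ofReal_sum_of_nonneg (fun x _ => Set.indicator_nonneg (fun y _ => hnn y) x)]
  refine Finset.sum_congr rfl fun x _ => ?_
  rw [Measure.smul_apply, Measure.dirac_apply, smul_eq_mul]
  by_cases hx : x ∈ E
  · rw [Set.indicator_of_mem hx, Set.indicator_of_mem hx, Pi.one_apply, mul_one]
  · rw [Set.indicator_of_notMem hx, Set.indicator_of_notMem hx, mul_zero,
      ENNReal.ofReal_zero]

lemma disc_prob (ν : X → ℝ) (hnn : ∀ x, 0 ≤ ν x) (htot : ∑ x : X, ν x = 1) :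
    IsProbabilityMeasure (disc ν) := by
  constructor
  rw [disc_apply ν hnn]
  simp [htot]

lemma disc_singleton (ν : X → ℝ) (hnn : ∀ x, 0 ≤ ν x) (x : X) :
    disc ν {x} = ENNReal.ofReal (ν x) := by
  classical
  rw [disc_apply ν hnn]
  congr 1
  rw [Finset.sum_congr rfl (fun y (_ : y ∈ Finset.univ) =>
    show Set.indicator {x} ν y = if y = x then ν y else 0 by
      by_cases hy : y = x
      · rw [if_pos hy, Set.indicator_of_mem (Set.mem_singleton_iff.2 hy)]
      · rw [if_neg hy, Set.indicator_of_notMem (fun h => hy (Set.mem_singleton_iff.1 h))])]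
  simp

lemma disc_integral (ν : X → ℝ) (hnn : ∀ x, 0 ≤ ν x) (htot : ∑ x : X, ν x = 1)
    (f : X → ℝ) : ∫ x, f x ∂(disc ν) = ∑ x : X, ν x * f x := by
  haveI := disc_prob ν hnn htot
  rw [integral_fintype (Integrable.of_finite)]
  refine Finset.sum_congr rfl fun x _ => ?_
  rw [measureReal_def, disc_singleton ν hnn, ENNReal.toReal_ofReal (hnn x), smul_eq_mul]

end Disc

end ExtremeAux

open ExtremeAux in
/-- Theorem 1 of the paper. Let `φ = (φ_1, …, φ_n)` be random variables with
`A_k ≤ φ_k ≤ B_k` a.s., `A_k < 0 < B_k`, `d ≤ n` a positive integer, and `G : ℝⁿ → [0,∞)`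
convex in each variable separately. Then there exist `{A_k, B_k}`-valued, mean-zero,
`d`-independent random variables `ξ_k` on some probability space with
`E[G(φ)] ≤ (1 + μ_d(φ)) E[G(ξ)]`, where
`μ_d(φ) = ∑_{∅ ≠ A ⊆ {1,…,n}, #A ≤ d} (∏_{j∈A} C_j⁻¹) |E[∏_{j∈A} φ_j]|`, `C_j = min{-A_j, B_j}`. -/
theorem extreme_inequality_convex_multivariate
    {Ω : Type*} [MeasurableSpace Ω] (μ : Measure Ω) [IsProbabilityMeasure μ]
    (n d : ℕ) (hd : 0 < d) (hdn : d ≤ n)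
    (φ : Fin n → Ω → ℝ) (hφmeas : ∀ k, Measurable (φ k))
    (a b : Fin n → ℝ) (ha : ∀ k, a k < 0) (hb : ∀ k, 0 < b k)
    (hbound : ∀ k, ∀ᵐ ω ∂μ, a k ≤ φ k ω ∧ φ k ω ≤ b k)
    (G : (Fin n → ℝ) → ℝ) (hG0 : ∀ t, 0 ≤ G t)
    (hGconv : ∀ (k : Fin n) (x : Fin n → ℝ),
      ConvexOn ℝ Set.univ (fun t : ℝ => G (Function.update x k t))) :
    ∃ (Ω' : Type) (_ : MeasurableSpace Ω') (μ' : Measure Ω')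
      (_ : IsProbabilityMeasure μ') (ξ : Fin n → Ω' → ℝ),
      (∀ k, Measurable (ξ k)) ∧
      (∀ k ω', ξ k ω' = a k ∨ ξ k ω' = b k) ∧
      (∀ k, ∫ ω', ξ k ω' ∂μ' = 0) ∧
      (∀ S : Finset (Fin n), S.card ≤ d →
        iIndepFun (m := fun _ => Real.measurableSpace) (fun i : S => ξ i) μ') ∧
      ∫ ω, G (fun k => φ k ω) ∂μ ≤
        (1 + ∑ A ∈ Finset.univ.filter
              (fun A : Finset (Fin n) => A.Nonempty ∧ A.card ≤ d),
            (∏ j ∈ A, (min (-(a j)) (b j))⁻¹) * |∫ ω, ∏ j ∈ A, φ j ω ∂μ|) *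
          ∫ ω', G (fun k => ξ k ω') ∂μ' := by
  classical
  have hab : ∀ k, a k < b k := fun k => (ha k).trans (hb k)
  letI mX : MeasurableSpace (Fin n → Bool) := ⊤
  haveI msc : MeasurableSingletonClass (Fin n → Bool) :=
    ⟨fun _ => MeasurableSpace.measurableSet_top⟩
  set ν : (Fin n → Bool) → ℝ := nu μ a b φ d with hν
  have hnn : ∀ x, 0 ≤ ν x := fun x => nu_nonneg ha hb hφmeas hbound x
  have hmudnn : 0 ≤ mud μ a b φ d := mud_nonneg (μ := μ) (φ := φ) (d := d) ha hb
  have hq : (0:ℝ) < 1 + mud μ a b φ d := one_add_mud_pos (μ := μ) (φ := φ) (d := d) ha hb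
  have htot : ∑ x : Fin n → Bool, ν x = 1 := by
    have h := nu_moment_eq (d := d) ha hb hφmeas hbound ∅
    have hem : (∅ : Finset (Fin n)) ∉ idx (n := n) d := by
      simp [idx]
    rw [if_pos rfl, if_neg hem] at h
    simp only [Finset.prod_empty, mul_one, integral_const, measure_univ, probReal_univ,
      ENNReal.toReal_one, smul_eq_mul, one_mul, sub_zero] at h
    rw [hν]
    rw [h, div_self hq.ne']
  have hmom : ∀ B : Finset (Fin n), B.Nonempty → B.card ≤ d →
      ∑ x : Fin n → Bool, ν x * ∏ k ∈ B, vv a b k (x k) = 0 := by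
    intro B hB1 hB2
    have hBidx : B ∈ idx (n := n) d := by
      simp [idx, hB1, hB2]
    have h := nu_moment_eq (d := d) ha hb hφmeas hbound B
    rw [if_pos hBidx, if_neg (fun h' => hB1.ne_empty h'.symm)] at h
    rw [hν, h, mul_zero, add_zero, sub_self, zero_div]
  have hξmeas : ∀ k, Measurable (fun x : Fin n → Bool => vv a b k (x k)) :=
    fun k => measurable_from_top
  refine ⟨Fin n → Bool, mX, disc ν, disc_prob ν hnn htot,
    fun k x => vv a b k (x k), hξmeas, ?_, ?_, ?_, ?_⟩
  · -- two-valued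
    intro k x
    cases hx : x k
    · left; simp [vv, hx]
    · right; simp [vv, hx]
  · -- mean zero
    intro k
    rw [disc_integral ν hnn htot]
    have h := hmom {k} (Finset.singleton_nonempty k) (by simpa using Nat.succ_le_of_lt hd)
    simpa [Finset.prod_singleton] using h
  · -- d-independence
    intro S hS
    rw [iIndepFun_iff_measure_inter_preimage_eq_mul]
    intro S' sets hsets
    set g : Fin n → Bool → ℝ := fun k c =>
      if h : k ∈ S then (if vv a b k c ∈ sets ⟨k, h⟩ then (1:ℝ) else 0) else 0 with hgdef
    have hgi : ∀ (i : {x // x ∈ S}) (c : Bool),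
        g (↑i) c = if vv a b (↑i) c ∈ sets i then (1:ℝ) else 0 := by
      intro i c
      rw [hgdef]
      simp only [Subtype.coe_eta, dif_pos i.2]
    have hginj : Set.InjOn (Subtype.val : {x // x ∈ S} → Fin n) ↑S' :=
      Subtype.val_injective.injOn
    have hcard : (S'.image Subtype.val).card ≤ d := by
      refine le_trans Finset.card_image_le (le_trans ?_ hS)
      rw [← Fintype.card_coe S]
      exact Finset.card_le_univ S'
    have hKPL := kpl hab d hd ν htot hmom (S'.image Subtype.val) hcard g
    have hmem : ∀ x : Fin n → Bool,
        x ∈ (⋂ i ∈ S', (fun y : Fin n → Bool => vv a b (↑i) (y ↑i)) ⁻¹' sets i)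
          ↔ ∀ i ∈ S', vv a b (↑i) (x ↑i) ∈ sets i := by
      intro x
      simp
    have e1 : ∀ x : Fin n → Bool,
        Set.indicator (⋂ i ∈ S', (fun y : Fin n → Bool => vv a b (↑i) (y ↑i)) ⁻¹' sets i) ν x
          = ν x * ∏ k ∈ S'.image Subtype.val, g k (x k) := by
      intro x
      rw [Finset.prod_image (fun i hi j hj h => hginj hi hj h)]
      by_cases hx : ∀ i ∈ S', vv a b (↑i) (x ↑i) ∈ sets i
      · rw [Set.indicator_of_mem ((hmem x).2 hx)]
        rw [Finset.prod_congr rfl fun i hi => by rw [hgi i (x ↑i), if_pos (hx i hi)]]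
        simp
      · rw [Set.indicator_of_notMem (fun h => hx ((hmem x).1 h))]
        push_neg at hx
        obtain ⟨i, hi, hni⟩ := hx
        rw [Finset.prod_eq_zero hi (by rw [hgi i (x ↑i), if_neg hni]), mul_zero]
    have e2 : ∀ i : {x // x ∈ S},
        (∑ x : Fin n → Bool, ν x * g (↑i) (x ↑i))
          = ∑ x : Fin n → Bool,
              Set.indicator ((fun y : Fin n → Bool => vv a b (↑i) (y ↑i)) ⁻¹' sets i) ν x := by
      intro i
      refine Finset.sum_congr rfl fun x _ => ?_
      by_cases hx : vv a b (↑i) (x ↑i) ∈ sets i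
      · rw [hgi i (x ↑i), if_pos hx, mul_one, Set.indicator_of_mem (show x ∈ (fun y : Fin n → Bool => vv a b (↑i) (y ↑i)) ⁻¹' sets i from hx) ν]
      · rw [hgi i (x ↑i), if_neg hx, mul_zero, Set.indicator_of_notMem (show x ∉ (fun y : Fin n → Bool => vv a b (↑i) (y ↑i)) ⁻¹' sets i from hx) ν]
    have e2nn : ∀ i : {x // x ∈ S},
        0 ≤ ∑ x : Fin n → Bool, ν x * g (↑i) (x ↑i) := by
      intro i
      refine Finset.sum_nonneg fun x _ => mul_nonneg (hnn x) ?_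
      rw [hgi i (x ↑i)]
      by_cases hx : vv a b (↑i) (x ↑i) ∈ sets i
      · rw [if_pos hx]; norm_num
      · rw [if_neg hx]
    calc disc ν (⋂ i ∈ S', (fun y : Fin n → Bool => vv a b (↑i) (y ↑i)) ⁻¹' sets i)
        = ENNReal.ofReal (∑ x : Fin n → Bool,
            Set.indicator (⋂ i ∈ S', (fun y : Fin n → Bool => vv a b (↑i) (y ↑i)) ⁻¹' sets i) ν x) :=
          disc_apply ν hnn _
      _ = ENNReal.ofReal (∑ x : Fin n → Bool, ν x * ∏ k ∈ S'.image Subtype.val, g k (x k)) := by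
          rw [Finset.sum_congr rfl fun x _ => e1 x]
      _ = ENNReal.ofReal (∏ i ∈ S', ∑ x : Fin n → Bool, ν x * g (↑i) (x ↑i)) := by
          rw [hKPL, Finset.prod_image (fun i hi j hj h => hginj hi hj h)]
      _ = ∏ i ∈ S', ENNReal.ofReal (∑ x : Fin n → Bool, ν x * g (↑i) (x ↑i)) :=
          ENNReal.ofReal_prod_of_nonneg (fun i _ => e2nn i)
      _ = ∏ i ∈ S', disc ν ((fun y : Fin n → Bool => vv a b (↑i) (y ↑i)) ⁻¹' sets i) := by
          refine Finset.prod_congr rfl fun i _ => ?_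
          rw [e2 i, ← disc_apply ν hnn]
  · -- the inequality
    rw [disc_integral ν hnn htot (fun x => G (fun k => vv a b k (x k)))]
    have h1 := integral_G_le hab hφmeas hbound G hG0 hGconv
    have h2 : ∑ ε : Fin n → Bool, lam μ a b φ ε * G (fun k => vv a b k (ε k))
        ≤ (1 + mud μ a b φ d) * ∑ x : Fin n → Bool, ν x * G (fun k => vv a b k (x k)) := by
      rw [Finset.mul_sum]
      refine Finset.sum_le_sum fun ε _ => ?_
      calc lam μ a b φ ε * G (fun k => vv a b k (ε k))
          ≤ ((1 + mud μ a b φ d) * ν ε) * G (fun k => vv a b k (ε k)) :=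
            mul_le_mul_of_nonneg_right (lam_le_nu ha hb hφmeas hbound ε) (hG0 _)
        _ = (1 + mud μ a b φ d) * (ν ε * G (fun k => vv a b k (ε k))) := by ring
    have hmudeq : mud μ a b φ d = ∑ A ∈ Finset.univ.filter
        (fun A : Finset (Fin n) => A.Nonempty ∧ A.card ≤ d),
        (∏ j ∈ A, (min (-(a j)) (b j))⁻¹) * |∫ ω, ∏ j ∈ A, φ j ω ∂μ| := rfl
    rw [← hmudeq]
    exact h1.trans h2
end

section
/- Let φ = (φ_1, …, φ_n) be random variables with ‖φ_k‖_∞ ≤ 1 for every k, let d ≤ n be a positive integer, and let G : ℝ^n → [0, ∞) be convex in each variable separately. Then there exist a probability space and random variables r_1, …, r_n on it such that each r_k takes only the values −1 and +1 with mean zero, any d of the r_k are mutually independent, and E[G(φ_1, …, φ_n)] ≤ (1 + μ_d(φ)) · E[G(r_1, …, r_n)]. In particular, when d = n the r_k may be taken to be independent Rademacher random variables. -/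
open MeasureTheory ProbabilityTheory

namespace ExtremeAux

variable {n : ℕ}

/-- the sign vector attached to a subset `A` of coordinates. -/
def sg (A : Finset (Fin n)) (k : Fin n) : ℝ := if k ∈ A then 1 else -1

lemma abs_sg (A : Finset (Fin n)) (k : Fin n) : |sg A k| = 1 := by
  unfold sg; split <;> norm_num

/-- flip membership of `j` -/
def flp (j : Fin n) (A : Finset (Fin n)) : Finset (Fin n) :=
  if j ∈ A then A.erase j else insert j A

lemma mem_flp (i j : Fin n) (A : Finset (Fin n)) :
    i ∈ flp j A ↔ (if i = j then i ∉ A else i ∈ A) := by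
  unfold flp
  by_cases hj : j ∈ A <;> by_cases hij : i = j <;>
    simp [hj, hij, Finset.mem_erase, Finset.mem_insert]

lemma flp_flp (j : Fin n) (A : Finset (Fin n)) : flp j (flp j A) = A := by
  ext i
  rw [mem_flp, mem_flp]
  by_cases hij : i = j <;> simp [hij]

lemma sg_flp_self (j : Fin n) (A : Finset (Fin n)) : sg (flp j A) j = - sg A j := by
  unfold sg
  by_cases hj : j ∈ A <;> simp [mem_flp, hj]

lemma sg_flp_ne {i j : Fin n} (h : i ≠ j) (A : Finset (Fin n)) : sg (flp j A) i = sg A i := by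
  unfold sg
  simp [mem_flp, h]

lemma flp_ne (j : Fin n) (A : Finset (Fin n)) : flp j A ≠ A := by
  intro hEq
  by_cases hj : j ∈ A
  · have := (mem_flp j j A); rw [hEq] at this; simp [hj] at this
  · have := (mem_flp j j A); rw [hEq] at this; simp [hj] at this

/-- Fourier fact : the sum of a nontrivial character over the cube vanishes. -/
lemma sum_chi (B : Finset (Fin n)) :
    ∑ A : Finset (Fin n), ∏ j ∈ B, sg A j = if B = ∅ then (2:ℝ)^n else 0 := by
  by_cases hB : B = ∅
  · subst hB
    simp [Finset.card_univ, Fintype.card_finset]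
  · rw [if_neg hB]
    obtain ⟨j, hj⟩ := Finset.nonempty_iff_ne_empty.2 hB
    apply Finset.sum_involution (fun A _ => flp j A)
    · intro A _
      have h1 : ∏ i ∈ B, sg (flp j A) i = - ∏ i ∈ B, sg A i := by
        rw [← Finset.mul_prod_erase B _ hj, ← Finset.mul_prod_erase B (sg A) hj,
          sg_flp_self]
        have : ∏ i ∈ B.erase j, sg (flp j A) i = ∏ i ∈ B.erase j, sg A i :=
          Finset.prod_congr rfl fun i hi => sg_flp_ne (Finset.mem_erase.1 hi).1 A
        rw [this]; ring
      rw [h1]; ring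
    · intro A _ _; exact flp_ne j A
    · intro A _; exact Finset.mem_univ _
    · intro A _; exact flp_flp j A

/-- orthogonality of characters -/
lemma sum_chi_mul_chi (B C : Finset (Fin n)) :
    ∑ A : Finset (Fin n), (∏ j ∈ B, sg A j) * ∏ j ∈ C, sg A j
      = if B = C then (2:ℝ)^n else 0 := by
  have key : ∀ A : Finset (Fin n),
      (∏ j ∈ B, sg A j) * ∏ j ∈ C, sg A j = ∏ j ∈ (B \ C) ∪ (C \ B), sg A j := by
    intro A
    have hB : ∏ j ∈ B, sg A j = (∏ j ∈ B ∩ C, sg A j) * ∏ j ∈ B \ C, sg A j :=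
      (Finset.prod_inter_mul_prod_diff B C _).symm
    have hC : ∏ j ∈ C, sg A j = (∏ j ∈ B ∩ C, sg A j) * ∏ j ∈ C \ B, sg A j := by
      rw [Finset.inter_comm]
      exact (Finset.prod_inter_mul_prod_diff C B _).symm
    have hsq : (∏ j ∈ B ∩ C, sg A j) * (∏ j ∈ B ∩ C, sg A j) = 1 := by
      rw [← Finset.prod_mul_distrib]
      rw [Finset.prod_congr rfl fun j _ => show sg A j * sg A j = 1 by
        unfold sg; split <;> norm_num]
      exact Finset.prod_const_one
    rw [hB, hC, Finset.prod_union disjoint_sdiff_sdiff]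
    linear_combination (∏ j ∈ B \ C, sg A j) * (∏ j ∈ C \ B, sg A j) * hsq
  rw [Finset.sum_congr rfl fun A _ => key A, sum_chi]
  congr 1
  simp only [eq_iff_iff]
  constructor
  · intro h
    have h1 : B \ C = ∅ := (Finset.union_eq_empty.1 h).1
    have h2 : C \ B = ∅ := (Finset.union_eq_empty.1 h).2
    exact Finset.Subset.antisymm (Finset.sdiff_eq_empty_iff_subset.1 h1)
      (Finset.sdiff_eq_empty_iff_subset.1 h2)
  · intro h; subst h; simp

lemma factor_nonneg {A : Finset (Fin n)} {x : Fin n → ℝ} (hx : ∀ k, |x k| ≤ 1) (k : Fin n) :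
    0 ≤ (1 + sg A k * x k) / 2 := by
  have := abs_le.1 (hx k)
  unfold sg; split <;> [linarith [this.2]; linarith [this.1]]

lemma factor_abs_le_one {A : Finset (Fin n)} {x : Fin n → ℝ} (hx : ∀ k, |x k| ≤ 1) (k : Fin n) :
    |(1 + sg A k * x k) / 2| ≤ 1 := by
  have := abs_le.1 (hx k)
  rw [abs_le]
  unfold sg; split <;> constructor <;> linarith [this.1, this.2]

/-- The multilinear interpolation bound coming from separate convexity. -/
lemma multilinear (G : (Fin n → ℝ) → ℝ)
    (hGconv : ∀ (k : Fin n) (x : Fin n → ℝ),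
      ConvexOn ℝ Set.univ (fun t : ℝ => G (Function.update x k t)))
    (x : Fin n → ℝ) (hx : ∀ k, |x k| ≤ 1) :
    G x ≤ ∑ A : Finset (Fin n), (∏ k, (1 + sg A k * x k) / 2) * G (sg A) := by
  have key : ∀ s : Finset (Fin n),
      G x ≤ ∑ A ∈ s.powerset, (∏ k ∈ s, (1 + sg A k * x k) / 2) *
        G (fun k => if k ∈ s then sg A k else x k) := by
    intro s
    induction s using Finset.induction_on with
    | empty => simp
    | @insert j s hj ih =>
      rw [Finset.sum_powerset_insert hj]
      refine le_trans ih ?_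
      have step : ∀ A ∈ s.powerset,
          (∏ k ∈ s, (1 + sg A k * x k) / 2) * G (fun k => if k ∈ s then sg A k else x k) ≤
          ((∏ k ∈ insert j s, (1 + sg A k * x k) / 2) *
              G (fun k => if k ∈ insert j s then sg A k else x k)) +
          ((∏ k ∈ insert j s, (1 + sg (insert j A) k * x k) / 2) *
              G (fun k => if k ∈ insert j s then sg (insert j A) k else x k)) := by
        intro A hA
        have hjA : j ∉ A := fun h => hj (Finset.mem_powerset.1 hA h)
        set y : Fin n → ℝ := fun k => if k ∈ s then sg A k else x k with hy
        have hyj : y j = x j := by simp [hy, hj]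
        have hsgA : sg A j = -1 := by unfold sg; simp [hjA]
        have hsgA' : sg (insert j A) j = 1 := by unfold sg; simp
        have hprodins : ∀ k ∈ s, sg (insert j A) k = sg A k := by
          intro k hk
          have : k ≠ j := fun h => hj (h ▸ hk)
          unfold sg; simp [Finset.mem_insert, this]
        have hblend1 : (fun k => if k ∈ insert j s then sg A k else x k)
            = Function.update y j (-1) := by
          funext k
          by_cases hkj : k = j
          · subst hkj; simp [hsgA]
          · simp [Function.update_of_ne hkj, hy, Finset.mem_insert, hkj]
        have hblend2 : (fun k => if k ∈ insert j s then sg (insert j A) k else x k)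
            = Function.update y j 1 := by
          funext k
          by_cases hkj : k = j
          · subst hkj; simp [hsgA']
          · by_cases hks : k ∈ s <;>
              simp [Function.update_of_ne hkj, hy, Finset.mem_insert, hkj, hks,
                hprodins k, hks]
        have hP : (0:ℝ) ≤ ∏ k ∈ s, (1 + sg A k * x k) / 2 :=
          Finset.prod_nonneg fun k _ => factor_nonneg hx k
        have hconv := (hGconv j y).2 (Set.mem_univ (1:ℝ)) (Set.mem_univ (-1:ℝ))
          (show (0:ℝ) ≤ (1 + x j)/2 by have := abs_le.1 (hx j); linarith [this.1])
          (show (0:ℝ) ≤ (1 - x j)/2 by have := abs_le.1 (hx j); linarith [this.2])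
          (show (1 + x j)/2 + (1 - x j)/2 = 1 by ring)
        have hGy : G y ≤ (1 + x j)/2 * G (Function.update y j 1)
            + (1 - x j)/2 * G (Function.update y j (-1)) := by
          simp only [smul_eq_mul] at hconv
          have harg : (1 + x j)/2 * 1 + (1 - x j)/2 * (-1) = x j := by ring
          rw [harg] at hconv
          have hupd : Function.update y j (x j) = y := by
            rw [← hyj]; exact Function.update_eq_self j y
          rwa [hupd] at hconv
        rw [Finset.prod_insert hj, Finset.prod_insert hj, hblend1, hblend2, hsgA, hsgA']
        have hprods : ∏ k ∈ s, (1 + sg (insert j A) k * x k) / 2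
            = ∏ k ∈ s, (1 + sg A k * x k) / 2 :=
          Finset.prod_congr rfl fun k hk => by rw [hprodins k hk]
        rw [hprods]
        set P := ∏ k ∈ s, (1 + sg A k * x k) / 2
        calc P * G y ≤ P * ((1 + x j)/2 * G (Function.update y j 1)
              + (1 - x j)/2 * G (Function.update y j (-1))) :=
              mul_le_mul_of_nonneg_left hGy hP
          _ = (1 + (-1:ℝ) * x j) / 2 * P * G (Function.update y j (-1))
              + (1 + 1 * x j) / 2 * P * G (Function.update y j 1) := by ring
      calc ∑ A ∈ s.powerset, (∏ k ∈ s, (1 + sg A k * x k) / 2) *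
            G (fun k => if k ∈ s then sg A k else x k)
          ≤ ∑ A ∈ s.powerset,
            (((∏ k ∈ insert j s, (1 + sg A k * x k) / 2) *
              G (fun k => if k ∈ insert j s then sg A k else x k)) +
            ((∏ k ∈ insert j s, (1 + sg (insert j A) k * x k) / 2) *
              G (fun k => if k ∈ insert j s then sg (insert j A) k else x k))) :=
            Finset.sum_le_sum step
        _ = _ := Finset.sum_add_distrib
  have := key Finset.univ
  rw [Finset.powerset_univ] at this
  refine le_trans this (le_of_eq (Finset.sum_congr rfl fun A _ => ?_))
  have : (fun k => if k ∈ Finset.univ then sg A k else x k) = sg A := by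
    funext k; simp
  rw [this]

end ExtremeAux


/-- Corollary 1 of the paper. If `‖φ_k‖_∞ ≤ 1` and `G : ℝⁿ → [0,∞)` is convex
in each variable separately, then there exist `d`-independent Rademacher random variables
`r_1, …, r_n` (each `{-1,1}`-valued with mean zero, i.e. taking each value with probability 1/2)
on some probability space such that `E[G(φ)] ≤ (1 + μ_d(φ)) E[G(r)]`, with
`μ_d(φ) = ∑_{∅ ≠ A ⊆ {1,…,n}, #A ≤ d} |E[∏_{j∈A} φ_j]|`. -/
theorem extreme_inequality_convex_multivariate_rademacher
    {Ω : Type*} [MeasurableSpace Ω] (μ : Measure Ω) [IsProbabilityMeasure μ]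
    (n d : ℕ) (hd : 0 < d) (hdn : d ≤ n)
    (φ : Fin n → Ω → ℝ) (hφmeas : ∀ k, Measurable (φ k))
    (hbound : ∀ k, ∀ᵐ ω ∂μ, |φ k ω| ≤ 1)
    (G : (Fin n → ℝ) → ℝ) (hG0 : ∀ t, 0 ≤ G t)
    (hGconv : ∀ (k : Fin n) (x : Fin n → ℝ),
      ConvexOn ℝ Set.univ (fun t : ℝ => G (Function.update x k t))) :
    ∃ (Ω' : Type) (_ : MeasurableSpace Ω') (μ' : Measure Ω')
      (_ : IsProbabilityMeasure μ') (r : Fin n → Ω' → ℝ),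
      (∀ k, Measurable (r k)) ∧
      (∀ k ω', r k ω' = -1 ∨ r k ω' = 1) ∧
      (∀ k, μ' {ω' | r k ω' = 1} = 1/2) ∧
      (∀ k, ∫ ω', r k ω' ∂μ' = 0) ∧
      (∀ S : Finset (Fin n), S.card ≤ d →
        iIndepFun (fun i : S => r i) μ') ∧
      ∫ ω, G (fun k => φ k ω) ∂μ ≤
        (1 + ∑ A ∈ Finset.univ.filter
              (fun A : Finset (Fin n) => A.Nonempty ∧ A.card ≤ d),
            |∫ ω, ∏ j ∈ A, φ j ω ∂μ|) *
          ∫ ω', G (fun k => r k ω') ∂μ' := by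
  classical
  -- abbreviations
  obtain ⟨m, hm⟩ : ∃ X : Finset (Fin n) → ℝ,
      X = fun B => ∫ ω, ∏ j ∈ B, φ j ω ∂μ := ⟨_, rfl⟩
  obtain ⟨Low, hLowdef⟩ : ∃ X : Finset (Finset (Fin n)),
      X = Finset.univ.filter (fun A : Finset (Fin n) => A.Nonempty ∧ A.card ≤ d) := ⟨_, rfl⟩
  obtain ⟨μd, hμddef⟩ : ∃ X : ℝ,
      X = ∑ B ∈ Low, |m B| := ⟨_, rfl⟩
  obtain ⟨M, hMdef⟩ : ∃ X : ℝ,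
      X = 1 + μd := ⟨_, rfl⟩
  have hμd0 : 0 ≤ μd := by
    rw [hμddef]; exact Finset.sum_nonneg fun B _ => abs_nonneg _
  have hM0 : (0:ℝ) < M := by rw [hMdef]; linarith
  obtain ⟨H, hHdef⟩ : ∃ X : Finset (Finset (Fin n)),
      X = Finset.univ.filter (fun B : Finset (Fin n) => d < B.card) := ⟨_, rfl⟩
  obtain ⟨q, hqdef⟩ : ∃ X : Finset (Fin n) → ℝ,
      X = fun A =>
    (1/2:ℝ)^n * (1 + (∑ B ∈ H, (∏ j ∈ B, ExtremeAux.sg A j) * m B) / M) := ⟨_, rfl⟩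
  have hpow0 : (0:ℝ) < (1/2:ℝ)^n := by positivity
  have hpowmul : ((1:ℝ)/2)^n * (2:ℝ)^n = 1 := by
    rw [one_div, inv_pow, inv_mul_cancel₀ (pow_ne_zero n two_ne_zero)]
  -- Fourier coefficients of q
  have fourier : ∀ C : Finset (Fin n), C.card ≤ d →
      ∑ A : Finset (Fin n), (∏ j ∈ C, ExtremeAux.sg A j) * q A
        = if C = ∅ then 1 else 0 := by
    intro C hC
    have expand : ∀ A : Finset (Fin n), (∏ j ∈ C, ExtremeAux.sg A j) * q A
        = (1/2:ℝ)^n * ((∏ j ∈ C, ExtremeAux.sg A j)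
          + (∑ B ∈ H, ((∏ j ∈ C, ExtremeAux.sg A j) * ∏ j ∈ B, ExtremeAux.sg A j) * m B) / M) := by
      intro A
      simp only [hqdef]
      have h : ∑ B ∈ H, ((∏ j ∈ C, ExtremeAux.sg A j) * ∏ j ∈ B, ExtremeAux.sg A j) * m B
          = (∏ j ∈ C, ExtremeAux.sg A j) * ∑ B ∈ H, (∏ j ∈ B, ExtremeAux.sg A j) * m B := by
        rw [Finset.mul_sum]
        exact Finset.sum_congr rfl fun B _ => by ring
      rw [h]
      field_simp
    rw [Finset.sum_congr rfl fun A _ => expand A, ← Finset.mul_sum, Finset.sum_add_distrib,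
      ← Finset.sum_div, ExtremeAux.sum_chi]
    have hzero : ∑ A : Finset (Fin n), ∑ B ∈ H,
        ((∏ j ∈ C, ExtremeAux.sg A j) * ∏ j ∈ B, ExtremeAux.sg A j) * m B = 0 := by
      rw [Finset.sum_comm]
      refine Finset.sum_eq_zero fun B hB => ?_
      rw [← Finset.sum_mul, ExtremeAux.sum_chi_mul_chi]
      have hBC : C ≠ B := by
        intro h
        rw [hHdef] at hB
        have := (Finset.mem_filter.1 hB).2
        rw [← h] at this
        omega
      rw [if_neg hBC, zero_mul]
    rw [hzero, zero_div, add_zero]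
    by_cases hCe : C = ∅
    · rw [if_pos hCe, if_pos hCe, hpowmul]
    · rw [if_neg hCe, if_neg hCe, mul_zero]
  have hsum_q : ∑ A : Finset (Fin n), q A = 1 := by
    have := fourier ∅ (by simp)
    simpa using this
  -- the box-counting identity
  have box : ∀ t : Finset (Fin n), t.card ≤ d → ∀ u v : Fin n → ℝ,
      ∑ A : Finset (Fin n), (∏ j ∈ t, (if j ∈ A then u j else v j)) * q A
        = ∏ j ∈ t, ((u j + v j) / 2) := by
    intro t ht u v
    have hind : ∀ A : Finset (Fin n),
        ∏ j ∈ t, (if j ∈ A then u j else v j)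
          = ∑ C ∈ t.powerset, (∏ j ∈ C, (u j + v j)/2) *
              ((∏ j ∈ t \ C, (u j - v j)/2) * ∏ j ∈ t \ C, ExtremeAux.sg A j) := by
      intro A
      have h1 : ∀ j ∈ t, (if j ∈ A then u j else v j)
          = (u j + v j)/2 + ((u j - v j)/2) * ExtremeAux.sg A j := by
        intro j _
        unfold ExtremeAux.sg
        by_cases hjA : j ∈ A <;> simp [hjA] <;> ring
      rw [Finset.prod_congr rfl h1, Finset.prod_add]
      refine Finset.sum_congr rfl fun C _ => ?_
      rw [Finset.prod_mul_distrib]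
    rw [Finset.sum_congr rfl fun A _ => by rw [hind A, Finset.sum_mul]]
    rw [Finset.sum_comm]
    have hterm : ∀ C ∈ t.powerset,
        ∑ A : Finset (Fin n), (∏ j ∈ C, (u j + v j)/2) *
            ((∏ j ∈ t \ C, (u j - v j)/2) * ∏ j ∈ t \ C, ExtremeAux.sg A j) * q A
          = (∏ j ∈ C, (u j + v j)/2) * (∏ j ∈ t \ C, (u j - v j)/2) *
              (if t \ C = ∅ then 1 else 0) := by
      intro C hC
      have hcard : (t \ C).card ≤ d :=
        le_trans (Finset.card_le_card (Finset.sdiff_subset)) ht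
      rw [← fourier (t \ C) hcard, Finset.mul_sum]
      refine Finset.sum_congr rfl fun A _ => by ring
    rw [Finset.sum_congr rfl hterm]
    rw [Finset.sum_eq_single_of_mem t (Finset.mem_powerset_self t) ?side]
    · rw [Finset.sdiff_self, if_pos rfl, Finset.prod_empty, mul_one, mul_one]
    case side =>
      intro C hC hne
      have : t \ C ≠ ∅ := by
        intro h
        exact hne (Finset.Subset.antisymm (Finset.mem_powerset.1 hC)
          (Finset.sdiff_eq_empty_iff_subset.1 h))
      rw [if_neg this, mul_zero]
    -- integrability facts
  have hae : ∀ᵐ ω ∂μ, ∀ k, |φ k ω| ≤ 1 := (ae_all_iff).2 hbound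
  have hint_prod : ∀ B : Finset (Fin n), Integrable (fun ω => ∏ j ∈ B, φ j ω) μ := by
    intro B
    have hmeas : Measurable fun ω => ∏ j ∈ B, φ j ω :=
      Finset.measurable_prod B fun j _ => hφmeas j
    refine (integrable_const (1:ℝ)).mono' hmeas.aestronglyMeasurable ?_
    filter_upwards [hae] with ω hω
    rw [Real.norm_eq_abs, Finset.abs_prod]
    exact Finset.prod_le_one (fun j _ => abs_nonneg _) (fun j _ => hω j)
  have hint_fact : ∀ A : Finset (Fin n),
      Integrable (fun ω => ∏ k, (1 + ExtremeAux.sg A k * φ k ω)/2) μ := by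
    intro A
    have hmeas : Measurable fun ω => ∏ k, (1 + ExtremeAux.sg A k * φ k ω)/2 :=
      Finset.measurable_prod _ fun k _ =>
        (((hφmeas k).const_mul (ExtremeAux.sg A k)).const_add 1).div_const 2
    refine (integrable_const (1:ℝ)).mono' hmeas.aestronglyMeasurable ?_
    filter_upwards [hae] with ω hω
    rw [Real.norm_eq_abs, Finset.abs_prod]
    exact Finset.prod_le_one (fun k _ => abs_nonneg _)
      (fun k _ => ExtremeAux.factor_abs_le_one hω k)
  -- the weights of φ
  obtain ⟨w, hwdef⟩ : ∃ X : Finset (Fin n) → ℝ,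
      X = fun A => ∫ ω, ∏ k, (1 + ExtremeAux.sg A k * φ k ω)/2 ∂μ := ⟨_, rfl⟩
  have hw_expand : ∀ A : Finset (Fin n),
      w A = (1/2:ℝ)^n * ∑ B : Finset (Fin n), (∏ j ∈ B, ExtremeAux.sg A j) * m B := by
    intro A
    have hpt : ∀ ω, (∏ k, (1 + ExtremeAux.sg A k * φ k ω)/2)
        = ∑ B : Finset (Fin n),
            (1/2:ℝ)^n * ((∏ j ∈ B, ExtremeAux.sg A j) * ∏ j ∈ B, φ j ω) := by
      intro ω
      have h1 : ∀ k ∈ (Finset.univ : Finset (Fin n)),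
          (1 + ExtremeAux.sg A k * φ k ω)/2
            = (ExtremeAux.sg A k * φ k ω + 1)/2 := fun k _ => by ring
      rw [Finset.prod_congr rfl h1, Finset.prod_div_distrib, Finset.prod_const,
        Finset.prod_add, Finset.card_univ, Fintype.card_fin, Finset.powerset_univ,
        Finset.sum_div]
      refine Finset.sum_congr rfl fun B _ => ?_
      rw [Finset.prod_const_one, mul_one, Finset.prod_mul_distrib, one_div, inv_pow]
      ring
    simp only [hwdef]
    rw [integral_congr_ae (Filter.Eventually.of_forall hpt)]
    rw [integral_finset_sum _ fun B _ => (((hint_prod B).const_mul _).const_mul _)]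
    rw [Finset.mul_sum]
    refine Finset.sum_congr rfl fun B _ => ?_
    rw [MeasureTheory.integral_const_mul, MeasureTheory.integral_const_mul]
    simp only [hm]
  -- partition of the cube of subsets
  have hpart : ∀ f : Finset (Fin n) → ℝ,
      ∑ B : Finset (Fin n), f B = f ∅ + ∑ B ∈ Low, f B + ∑ B ∈ H, f B := by
    intro f
    have h1 := Finset.sum_filter_add_sum_filter_not (Finset.univ : Finset (Finset (Fin n)))
      (fun B => B = ∅) f
    have h2 := Finset.sum_filter_add_sum_filter_not
      (Finset.univ.filter (fun B : Finset (Fin n) => ¬ B = ∅)) (fun B => B.card ≤ d) f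
    have e1 : Finset.univ.filter (fun B : Finset (Fin n) => B = ∅) = {∅} := by
      rw [Finset.filter_eq']; simp
    have e2 : (Finset.univ.filter (fun B : Finset (Fin n) => ¬ B = ∅)).filter
        (fun B => B.card ≤ d) = Low := by
      rw [Finset.filter_filter, hLowdef]
      apply Finset.ext
      intro B
      simp [Finset.nonempty_iff_ne_empty]
    have e3 : (Finset.univ.filter (fun B : Finset (Fin n) => ¬ B = ∅)).filter
        (fun B => ¬ B.card ≤ d) = H := by
      rw [Finset.filter_filter, hHdef]
      apply Finset.ext
      intro B
      simp only [Finset.mem_filter, Finset.mem_univ, true_and, not_le]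
      constructor
      · exact fun h => h.2
      · intro h
        refine ⟨?_, h⟩
        intro hB
        rw [hB] at h
        simp at h
    rw [e2, e3] at h2
    rw [e1, Finset.sum_singleton] at h1
    linarith
  have hm_empty : m ∅ = 1 := by
    simp only [hm]
    simp
  -- the key identity and inequalities for q
  have hMq : ∀ A : Finset (Fin n), M * q A
      = w A + (1/2:ℝ)^n * (μd - ∑ B ∈ Low, (∏ j ∈ B, ExtremeAux.sg A j) * m B) := by
    intro A
    have h2 : M * q A
        = (1/2:ℝ)^n * (M + ∑ B ∈ H, (∏ j ∈ B, ExtremeAux.sg A j) * m B) := by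
      simp only [hqdef]
      field_simp
    rw [h2, hw_expand A, hpart (fun B => (∏ j ∈ B, ExtremeAux.sg A j) * m B)]
    simp only [Finset.prod_empty, one_mul, hm_empty]
    rw [hMdef]
    ring
  have hLow_le : ∀ A : Finset (Fin n),
      ∑ B ∈ Low, (∏ j ∈ B, ExtremeAux.sg A j) * m B ≤ μd := by
    intro A
    rw [hμddef]
    refine Finset.sum_le_sum fun B _ => ?_
    calc (∏ j ∈ B, ExtremeAux.sg A j) * m B ≤ |(∏ j ∈ B, ExtremeAux.sg A j) * m B| :=
        le_abs_self _
      _ = |m B| := by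
        rw [abs_mul, Finset.abs_prod,
          Finset.prod_congr rfl fun j _ => ExtremeAux.abs_sg A j,
          Finset.prod_const_one, one_mul]
  have hw0 : ∀ A : Finset (Fin n), 0 ≤ w A := by
    intro A
    simp only [hwdef]
    refine integral_nonneg_of_ae ?_
    filter_upwards [hae] with ω hω
    exact Finset.prod_nonneg fun k _ => ExtremeAux.factor_nonneg hω k
  have hq0 : ∀ A : Finset (Fin n), 0 ≤ q A := by
    intro A
    have h1 : 0 ≤ M * q A := by
      rw [hMq A]
      exact add_nonneg (hw0 A)
        (mul_nonneg hpow0.le (sub_nonneg.2 (hLow_le A)))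
    nlinarith
  have hwle : ∀ A : Finset (Fin n), w A ≤ M * q A := by
    intro A
    rw [hMq A]
    have := mul_nonneg hpow0.le (sub_nonneg.2 (hLow_le A))
    linarith
    -- construction of the probability space
  letI mΩ' : MeasurableSpace (Finset (Fin n)) := ⊤
  haveI hSC : MeasurableSingletonClass (Finset (Fin n)) := ⟨fun _ => trivial⟩
  obtain ⟨μ', hμ'def⟩ : ∃ μ'' : Measure (Finset (Fin n)),
      μ'' = ∑ A : Finset (Fin n), (ENNReal.ofReal (q A)) • Measure.dirac A := ⟨_, rfl⟩
  have hμ'apply : ∀ E : Set (Finset (Fin n)),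
      μ' E = ENNReal.ofReal (∑ A : Finset (Fin n), E.indicator q A) := by
    intro E
    rw [hμ'def, Measure.finset_sum_apply]
    rw [ENNReal.ofReal_sum_of_nonneg
      (fun A _ => Set.indicator_nonneg (fun a _ => hq0 a) A)]
    refine Finset.sum_congr rfl fun A _ => ?_
    rw [Measure.smul_apply, smul_eq_mul, Measure.dirac_apply]
    by_cases hAE : A ∈ E
    · rw [Set.indicator_of_mem hAE, Set.indicator_of_mem hAE, Pi.one_apply, mul_one]
    · rw [Set.indicator_of_notMem hAE, Set.indicator_of_notMem hAE, mul_zero,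
        ENNReal.ofReal_zero]
  haveI hprob : IsProbabilityMeasure μ' := by
    constructor
    rw [hμ'apply]
    simp only [Set.indicator_univ]
    rw [hsum_q, ENNReal.ofReal_one]
  obtain ⟨r, hrdef⟩ : ∃ r' : Fin n → Finset (Fin n) → ℝ,
      r' = fun k A => ExtremeAux.sg A k := ⟨_, rfl⟩
  have hintegral : ∀ f : Finset (Fin n) → ℝ,
      ∫ x, f x ∂μ' = ∑ A : Finset (Fin n), q A * f A := by
    intro f
    rw [integral_fintype (f := f) (Integrable.of_finite)]
    refine Finset.sum_congr rfl fun A _ => ?_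
    have hsingle : μ' {A} = ENNReal.ofReal (q A) := by
      rw [hμ'apply]
      congr 1
      rw [Finset.sum_eq_single_of_mem A (Finset.mem_univ A)]
      · exact Set.indicator_of_mem rfl q
      · intro B _ hBA
        exact Set.indicator_of_notMem (by simpa using hBA) q
    rw [measureReal_def, hsingle, ENNReal.toReal_ofReal (hq0 A), smul_eq_mul]
  refine ⟨Finset (Fin n), mΩ', μ', hprob, r, ?_, ?_, ?_, ?_, ?_, ?_⟩
  · -- measurability
    intro k
    exact measurable_from_top
  · -- values
    intro k A
    simp only [hrdef]
    unfold ExtremeAux.sg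
    by_cases h : k ∈ A
    · right; rw [if_pos h]
    · left; rw [if_neg h]
  · -- probability one half
    intro k
    have hset : {ω' : Finset (Fin n) | r k ω' = 1} = {A : Finset (Fin n) | k ∈ A} := by
      ext A
      simp only [Set.mem_setOf_eq, hrdef]
      unfold ExtremeAux.sg
      by_cases h : k ∈ A <;> simp [h] <;> norm_num
    rw [hset, hμ'apply]
    have hval : ∑ A : Finset (Fin n),
        ({A : Finset (Fin n) | k ∈ A}).indicator q A = 1/2 := by
      have hb := box {k} (by rw [Finset.card_singleton]; omega)
        (fun _ => (1:ℝ)) (fun _ => (0:ℝ))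
      simp only [Finset.prod_singleton] at hb
      calc ∑ A : Finset (Fin n), ({A : Finset (Fin n) | k ∈ A}).indicator q A
          = ∑ A : Finset (Fin n), (if k ∈ A then (1:ℝ) else 0) * q A := by
            refine Finset.sum_congr rfl fun A _ => ?_
            by_cases h : k ∈ A
            · rw [Set.indicator_of_mem (show A ∈ {A : Finset (Fin n) | k ∈ A} from h) q,
                if_pos h, one_mul]
            · rw [Set.indicator_of_notMem
                (show A ∉ {A : Finset (Fin n) | k ∈ A} from h) q, if_neg h, zero_mul]
        _ = ((1:ℝ) + 0)/2 := hb
        _ = 1/2 := by norm_num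
    rw [hval]
    rw [ENNReal.ofReal_div_of_pos (by norm_num), ENNReal.ofReal_one,
      ENNReal.ofReal_ofNat]
  · -- mean zero
    intro k
    have hf := fourier {k} (by rw [Finset.card_singleton]; omega)
    rw [if_neg (Finset.singleton_ne_empty k)] at hf
    simp only [Finset.prod_singleton] at hf
    rw [hintegral (r k), ← hf]
    refine Finset.sum_congr rfl fun A _ => ?_
    simp only [hrdef]
    ring
  · -- d-independence
    intro S hS
    rw [iIndepFun_iff_measure_inter_preimage_eq_mul]
    intro s sets hsets
    obtain ⟨u, hudef⟩ : ∃ u' : Fin n → ℝ, u' = fun j =>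
        if h : j ∈ S then (if (1:ℝ) ∈ sets ⟨j, h⟩ then 1 else 0) else 0 := ⟨_, rfl⟩
    obtain ⟨v, hvdef⟩ : ∃ v' : Fin n → ℝ, v' = fun j =>
        if h : j ∈ S then (if (-1:ℝ) ∈ sets ⟨j, h⟩ then 1 else 0) else 0 := ⟨_, rfl⟩
    have hu : ∀ i : {x // x ∈ S}, u ↑i = if (1:ℝ) ∈ sets i then 1 else 0 := by
      intro i
      simp only [hudef]
      rw [dif_pos i.2, Subtype.coe_eta]
    have hv : ∀ i : {x // x ∈ S}, v ↑i = if (-1:ℝ) ∈ sets i then 1 else 0 := by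
      intro i
      simp only [hvdef]
      rw [dif_pos i.2, Subtype.coe_eta]
    have hkey : ∀ (i : {x // x ∈ S}) (A : Finset (Fin n)),
        (if ExtremeAux.sg A ↑i ∈ sets i then (1:ℝ) else 0)
          = if (↑i : Fin n) ∈ A then u ↑i else v ↑i := by
      intro i A
      by_cases hiA : (↑i : Fin n) ∈ A
      · rw [if_pos hiA, hu i]
        unfold ExtremeAux.sg
        rw [if_pos hiA]
      · rw [if_neg hiA, hv i]
        unfold ExtremeAux.sg
        rw [if_neg hiA]
    have huv2 : ∀ i : {x // x ∈ S}, 0 ≤ (u ↑i + v ↑i)/2 := by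
      intro i
      rw [hu i, hv i]
      by_cases h1 : (1:ℝ) ∈ sets i <;> by_cases h2 : (-1:ℝ) ∈ sets i <;>
        simp [h1, h2] <;> norm_num
    obtain ⟨t, htdef⟩ : ∃ t' : Finset (Fin n),
        t' = s.map ⟨Subtype.val, Subtype.val_injective⟩ := ⟨_, rfl⟩
    have htcard : t.card ≤ d := by
      rw [htdef, Finset.card_map]
      calc s.card ≤ (Finset.univ : Finset {x // x ∈ S}).card := Finset.card_le_univ s
        _ = S.card := by rw [Finset.card_univ, Fintype.card_coe]
        _ ≤ d := hS
    have hfac : ∀ i : {x // x ∈ S},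
        μ' ((fun i : {x // x ∈ S} => r ↑i) i ⁻¹' sets i)
          = ENNReal.ofReal ((u ↑i + v ↑i)/2) := by
      intro i
      rw [hμ'apply]
      congr 1
      have hb := box {(↑i : Fin n)} (by rw [Finset.card_singleton]; omega) u v
      simp only [Finset.prod_singleton] at hb
      rw [← hb]
      refine Finset.sum_congr rfl fun A _ => ?_
      have hmemiff : A ∈ (fun i : {x // x ∈ S} => r ↑i) i ⁻¹' sets i
          ↔ ExtremeAux.sg A ↑i ∈ sets i := by
        simp only [Set.mem_preimage, hrdef]
      have h2 : ((fun i : {x // x ∈ S} => r ↑i) i ⁻¹' sets i).indicator q A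
          = (if ExtremeAux.sg A ↑i ∈ sets i then (1:ℝ) else 0) * q A := by
        by_cases hmem : ExtremeAux.sg A ↑i ∈ sets i
        · rw [Set.indicator_of_mem (hmemiff.2 hmem) q, if_pos hmem, one_mul]
        · rw [Set.indicator_of_notMem (fun hc => hmem (hmemiff.1 hc)) q,
            if_neg hmem, zero_mul]
      rw [h2, hkey i A]
    have hLHS : μ' (⋂ i ∈ s, (fun i : {x // x ∈ S} => r ↑i) i ⁻¹' sets i)
        = ENNReal.ofReal (∏ i ∈ s, ((u ↑i + v ↑i)/2)) := by
      rw [hμ'apply]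
      congr 1
      have hprodmatch : ∏ j ∈ t, ((u j + v j)/2) = ∏ i ∈ s, ((u ↑i + v ↑i)/2) := by
        rw [htdef, Finset.prod_map]
        rfl
      rw [← hprodmatch, ← box t htcard u v]
      refine Finset.sum_congr rfl fun A _ => ?_
      have hmem : A ∈ (⋂ i ∈ s, (fun i : {x // x ∈ S} => r ↑i) i ⁻¹' sets i)
          ↔ ∀ i ∈ s, ExtremeAux.sg A ↑i ∈ sets i := by
        simp only [Set.mem_iInter, Set.mem_preimage, hrdef]
      have hprodA : (∏ j ∈ t, (if j ∈ A then u j else v j))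
          = if (∀ i ∈ s, ExtremeAux.sg A ↑i ∈ sets i) then (1:ℝ) else 0 := by
        rw [htdef, Finset.prod_map]
        simp only [Function.Embedding.coeFn_mk]
        have hc : ∀ i ∈ s,
            (if (↑i : Fin n) ∈ A then u ↑i else v ↑i)
              = if ExtremeAux.sg A ↑i ∈ sets i then (1:ℝ) else 0 :=
          fun i _ => (hkey i A).symm
        rw [Finset.prod_congr rfl hc, Finset.prod_boole]
        by_cases hall : ∀ i ∈ s, ExtremeAux.sg A ↑i ∈ sets i
        · rw [if_pos hall, if_pos hall]
        · rw [if_neg hall, if_neg hall]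
      by_cases hall : ∀ i ∈ s, ExtremeAux.sg A ↑i ∈ sets i
      · rw [Set.indicator_of_mem (hmem.2 hall) q, hprodA, if_pos hall, one_mul]
      · rw [Set.indicator_of_notMem (fun hc => hall (hmem.1 hc)) q, hprodA,
          if_neg hall, zero_mul]
    rw [hLHS, Finset.prod_congr rfl (fun i _ => hfac i),
      ← ENNReal.ofReal_prod_of_nonneg (fun i _ => huv2 i)]
  · -- the main inequality
    by_cases hInt : Integrable (fun ω => G (fun k => φ k ω)) μ
    case neg =>
      rw [integral_undef hInt]
      refine mul_nonneg ?_ (integral_nonneg fun ω' => hG0 _)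
      have h0 : (0:ℝ) ≤ ∑ A ∈ Finset.univ.filter
          (fun A : Finset (Fin n) => A.Nonempty ∧ A.card ≤ d),
          |∫ ω, ∏ j ∈ A, φ j ω ∂μ| := Finset.sum_nonneg fun A _ => abs_nonneg _
      linarith
    case pos =>
    have hstep1 : ∫ ω, G (fun k => φ k ω) ∂μ
        ≤ ∫ ω, ∑ A : Finset (Fin n),
            (∏ k, (1 + ExtremeAux.sg A k * φ k ω)/2) * G (ExtremeAux.sg A) ∂μ := by
      refine integral_mono_ae hInt
        (integrable_finset_sum _ fun A _ => (hint_fact A).mul_const _) ?_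
      filter_upwards [hae] with ω hω
      exact ExtremeAux.multilinear G hGconv (fun k => φ k ω) hω
    have hstep2 : ∫ ω, ∑ A : Finset (Fin n),
          (∏ k, (1 + ExtremeAux.sg A k * φ k ω)/2) * G (ExtremeAux.sg A) ∂μ
        = ∑ A : Finset (Fin n), w A * G (ExtremeAux.sg A) := by
      rw [integral_finset_sum _ fun A _ => (hint_fact A).mul_const _]
      refine Finset.sum_congr rfl fun A _ => ?_
      rw [MeasureTheory.integral_mul_const]
      simp only [hwdef]
    have hstep3 : ∑ A : Finset (Fin n), w A * G (ExtremeAux.sg A)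
        ≤ ∑ A : Finset (Fin n), M * (q A * G (ExtremeAux.sg A)) := by
      refine Finset.sum_le_sum fun A _ => ?_
      rw [← mul_assoc]
      exact mul_le_mul_of_nonneg_right (hwle A) (hG0 _)
    have hr_eq : ∀ A : Finset (Fin n), (fun k => r k A) = ExtremeAux.sg A := by
      intro A
      funext k
      simp only [hrdef]
    have hstep4 : ∫ ω', G (fun k => r k ω') ∂μ'
        = ∑ A : Finset (Fin n), q A * G (ExtremeAux.sg A) := by
      rw [hintegral (fun x => G (fun k => r k x))]
      exact Finset.sum_congr rfl fun A _ => by rw [hr_eq A]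
    have hstep5 : ∑ A : Finset (Fin n), M * (q A * G (ExtremeAux.sg A))
        = M * ∫ ω', G (fun k => r k ω') ∂μ' := by
      rw [← Finset.mul_sum, hstep4]
    have hMeq : (1 + ∑ A ∈ Finset.univ.filter
          (fun A : Finset (Fin n) => A.Nonempty ∧ A.card ≤ d),
        |∫ ω, ∏ j ∈ A, φ j ω ∂μ|) = M := by
      simp only [hMdef, hμddef, hLowdef, hm]
    rw [hMeq]
    exact le_trans (le_trans hstep1 (le_of_eq hstep2)) (le_trans hstep3 (le_of_eq hstep5))
end

section
/- Let φ_1, …, φ_n be measurable functions on [0,1) (with Lebesgue measure) satisfying A_k ≤ φ_k(x) ≤ B_k with A_k < 0 < B_k, and let M be an arbitrary family of nonempty subsets of {1, …, n}. Set μ = Σ_{A∈M} (∏_{j∈A} C_j^{−1}) · |∫_0^1 ∏_{j∈A} φ_j|, where C_k = min{−A_k, B_k}, and assume μ < ∞. Then the functions φ_k can be extended to measurable functions on [0, 1+μ) so that A_k ≤ φ_k(x) ≤ B_k for all x ∈ [0, 1+μ), ∫_0^{1+μ} ∏_{j∈A} φ_j = 0 for every A ∈ M, and each φ_k restricted to [1,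 1+μ) is a step function. -/
open MeasureTheory

/-- A step function on `[a, b)`: a finite linear combination of indicator functions of
subintervals `[α, β) ⊆ [a, b)`. -/
def IsStepFunction (f : ℝ → ℝ) (a b : ℝ) : Prop :=
  ∃ (m : ℕ) (c : Fin m → ℝ) (α β : Fin m → ℝ),
    (∀ i, a ≤ α i ∧ β i ≤ b) ∧
    ∀ x ∈ Set.Ico a b,
      f x = ∑ i, c i * (Set.Ico (α i) (β i)).indicator (fun _ => (1 : ℝ)) x

namespace ExtLem

/-- Rademacher-type sign: the `i`-th bit of `t`, as `±1`. -/
def eps (t i : ℕ) : ℝ := if Nat.testBit t i then 1 else -1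

lemma eps_pm (t i : ℕ) : eps t i = 1 ∨ eps t i = -1 := by
  unfold eps; split <;> simp

lemma eps_sq (t i : ℕ) : eps t i * eps t i = 1 := by
  rcases eps_pm t i with h | h <;> rw [h] <;> norm_num

lemma prod_eps_pm (t : ℕ) (S : Finset ℕ) :
    (∏ i ∈ S, eps t i) = 1 ∨ (∏ i ∈ S, eps t i) = -1 := by
  induction S using Finset.induction_on with
  | empty => simp
  | insert _ _ hnot ih =>
    rw [Finset.prod_insert hnot]
    rcases eps_pm t _ with h | h <;> rcases ih with h' | h' <;> rw [h, h'] <;> norm_num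

lemma prod_eps_sq (t : ℕ) (S : Finset ℕ) :
    (∏ i ∈ S, eps t i) * (∏ i ∈ S, eps t i) = 1 := by
  rcases prod_eps_pm t S with h | h <;> rw [h] <;> norm_num

lemma eps_xor (t i₀ i : ℕ) :
    eps (t ^^^ 2 ^ i₀) i = if i = i₀ then -eps t i else eps t i := by
  unfold eps
  rw [Nat.testBit_xor, Nat.testBit_two_pow]
  by_cases h : i = i₀
  · subst h; simp only [decide_eq_true_eq, if_pos rfl, decide_true]
    cases ht : t.testBit i <;> simp [ht]
  · have : ¬ (i₀ = i) := fun h' => h h'.symm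
    simp only [this, decide_false, if_neg h]
    cases ht : t.testBit i <;> simp [ht]

lemma prod_eps_xor (t i₀ : ℕ) (U : Finset ℕ) (h : i₀ ∈ U) :
    ∏ i ∈ U, eps (t ^^^ 2 ^ i₀) i = -∏ i ∈ U, eps t i := by
  rw [← Finset.mul_prod_erase U _ h, ← Finset.mul_prod_erase U (fun i => eps t i) h]
  have h1 : ∏ i ∈ U.erase i₀, eps (t ^^^ 2 ^ i₀) i = ∏ i ∈ U.erase i₀, eps t i := by
    refine Finset.prod_congr rfl fun i hi => ?_
    rw [eps_xor, if_neg (Finset.ne_of_mem_erase hi)]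
  rw [h1, eps_xor, if_pos rfl]
  ring

lemma walsh_sum (q : ℕ) (U : Finset ℕ) (hU : U.Nonempty) (hUq : ∀ i ∈ U, i < q) :
    ∑ t ∈ Finset.range (2 ^ q), ∏ i ∈ U, eps t i = 0 := by
  obtain ⟨i₀, hi₀⟩ := hU
  refine Finset.sum_involution (fun t _ => t ^^^ 2 ^ i₀) ?_ ?_ ?_ ?_
  · intro t _
    rw [prod_eps_xor t i₀ U hi₀]; ring
  · intro t _ hf heq
    apply hf
    have := prod_eps_xor t i₀ U hi₀
    rw [heq] at this
    linarith
  · intro t ht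
    rw [Finset.mem_range] at ht ⊢
    exact Nat.xor_lt_two_pow ht (Nat.pow_lt_pow_right one_lt_two (hUq i₀ hi₀))
  · intro t _
    rw [Nat.xor_assoc, Nat.xor_self, Nat.xor_zero]


variable {n : ℕ}

/-- `C_k = min(-A_k, B_k)`. -/
def Cc (a b : Fin n → ℝ) (k : Fin n) : ℝ := min (-(a k)) (b k)

/-- `I_A = ∫_0^1 ∏_{j∈A} φ_j`. -/
noncomputable def Iv (φ : Fin n → ℝ → ℝ) (A : Finset (Fin n)) : ℝ :=
  ∫ x in Set.Ico (0:ℝ) 1, ∏ j ∈ A, φ j x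

noncomputable def sg (φ : Fin n → ℝ → ℝ) (A : Finset (Fin n)) : ℝ :=
  if 0 ≤ Iv φ A then 1 else -1

/-- Block length for `A`. -/
noncomputable def Lb (φ : Fin n → ℝ → ℝ) (a b : Fin n → ℝ) (A : Finset (Fin n)) : ℝ :=
  (∏ j ∈ A, (Cc a b j)⁻¹) * |Iv φ A|

noncomputable def key (A : Finset (Fin n)) : ℕ := (Fintype.equivFin (Finset (Fin n)) A).val

noncomputable def st (φ : Fin n → ℝ → ℝ) (a b : Fin n → ℝ) (M : Finset (Finset (Fin n)))
    (A : Finset (Fin n)) : ℝ :=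
  1 + ∑ A' ∈ M.filter (fun A' => key A' < key A), Lb φ a b A'

def NA (A : Finset (Fin n)) : ℕ := 2 ^ A.card

noncomputable def len (φ : Fin n → ℝ → ℝ) (a b : Fin n → ℝ) (A : Finset (Fin n)) : ℝ :=
  Lb φ a b A / (NA A : ℝ)

noncomputable def rk (A : Finset (Fin n)) (k : Fin n) : ℕ :=
  if h : k ∈ A then ((A.equivFin ⟨k, h⟩ : Fin A.card) : ℕ) else A.card

noncomputable def sgm (φ : Fin n → ℝ → ℝ) (A : Finset (Fin n)) (t : ℕ) (k : Fin n) : ℝ :=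
  eps t (rk A k) *
    (if rk A k = 0 then -(sg φ A) * ∏ i ∈ Finset.range A.card, eps t i else 1)

noncomputable def vl (φ : Fin n → ℝ → ℝ) (a b : Fin n → ℝ) (k : Fin n) (A : Finset (Fin n))
    (t : ℕ) : ℝ :=
  if k ∈ A then Cc a b k * sgm φ A t k else 0

noncomputable def piece (φ : Fin n → ℝ → ℝ) (a b : Fin n → ℝ) (M : Finset (Finset (Fin n)))
    (A : Finset (Fin n)) (t : ℕ) : Set ℝ :=
  Set.Ico (st φ a b M A + t * len φ a b A) (st φ a b M A + (t + 1) * len φ a b A)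

noncomputable def step (φ : Fin n → ℝ → ℝ) (a b : Fin n → ℝ) (M : Finset (Finset (Fin n)))
    (k : Fin n) (x : ℝ) : ℝ :=
  ∑ A ∈ M, ∑ t ∈ Finset.range (NA A),
    vl φ a b k A t * (piece φ a b M A t).indicator (fun _ => (1:ℝ)) x

noncomputable def psi (φ : Fin n → ℝ → ℝ) (a b : Fin n → ℝ) (M : Finset (Finset (Fin n)))
    (k : Fin n) (x : ℝ) : ℝ :=
  (Set.Ico (0:ℝ) 1).indicator (φ k) x + step φ a b M k x

section Basic

variable (φ : Fin n → ℝ → ℝ) (a b : Fin n → ℝ) (M : Finset (Finset (Fin n)))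

lemma Cc_pos (ha : ∀ k, a k < 0) (hb : ∀ k, 0 < b k) (k : Fin n) : 0 < Cc a b k :=
  lt_min (by linarith [ha k]) (hb k)

lemma Lb_nonneg (ha : ∀ k, a k < 0) (hb : ∀ k, 0 < b k) (A : Finset (Fin n)) :
    0 ≤ Lb φ a b A := by
  refine mul_nonneg (Finset.prod_nonneg fun j _ => ?_) (abs_nonneg _)
  exact inv_nonneg.mpr (Cc_pos a b ha hb j).le

lemma NA_pos (A : Finset (Fin n)) : 0 < NA A := Nat.pow_pos (by norm_num)

lemma NA_cast_pos (A : Finset (Fin n)) : (0:ℝ) < (NA A : ℝ) := by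
  exact_mod_cast NA_pos A

lemma len_nonneg (ha : ∀ k, a k < 0) (hb : ∀ k, 0 < b k) (A : Finset (Fin n)) :
    0 ≤ len φ a b A :=
  div_nonneg (Lb_nonneg φ a b ha hb A) (NA_cast_pos A).le

lemma NA_mul_len (A : Finset (Fin n)) : (NA A : ℝ) * len φ a b A = Lb φ a b A := by
  rw [len, mul_div_cancel₀]
  exact (NA_cast_pos A).ne'

lemma st_ge_one (ha : ∀ k, a k < 0) (hb : ∀ k, 0 < b k) (A : Finset (Fin n)) :
    1 ≤ st φ a b M A :=
  le_add_of_nonneg_right (Finset.sum_nonneg fun A' _ => Lb_nonneg φ a b ha hb A')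

lemma key_inj {A A' : Finset (Fin n)} (h : key A = key A') : A = A' := by
  have := Fin.val_injective h
  exact (Fintype.equivFin (Finset (Fin n))).injective this

lemma block_le (ha : ∀ k, a k < 0) (hb : ∀ k, 0 < b k) {A A' : Finset (Fin n)}
    (hA : A ∈ M) (h : key A < key A') :
    st φ a b M A + Lb φ a b A ≤ st φ a b M A' := by
  unfold st
  have hnot : A ∉ M.filter (fun A'' => key A'' < key A) := by
    simp only [Finset.mem_filter]; exact fun hc => lt_irrefl _ hc.2
  have hsub : insert A (M.filter (fun A'' => key A'' < key A)) ⊆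
      M.filter (fun A'' => key A'' < key A') := by
    intro B hB
    rcases Finset.mem_insert.mp hB with rfl | hB
    · exact Finset.mem_filter.mpr ⟨hA, h⟩
    · rcases Finset.mem_filter.mp hB with ⟨h1, h2⟩
      exact Finset.mem_filter.mpr ⟨h1, h2.trans h⟩
  have := Finset.sum_le_sum_of_subset_of_nonneg hsub
    (fun B _ _ => Lb_nonneg φ a b ha hb B)
  rw [Finset.sum_insert hnot] at this
  linarith

lemma block_hi_le (ha : ∀ k, a k < 0) (hb : ∀ k, 0 < b k) {A : Finset (Fin n)} (hA : A ∈ M) :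
    st φ a b M A + Lb φ a b A ≤ 1 + ∑ B ∈ M, Lb φ a b B := by
  unfold st
  have hnot : A ∉ M.filter (fun A'' => key A'' < key A) := by
    simp only [Finset.mem_filter]; exact fun hc => lt_irrefl _ hc.2
  have hsub : insert A (M.filter (fun A'' => key A'' < key A)) ⊆ M := by
    intro B hB
    rcases Finset.mem_insert.mp hB with rfl | hB
    · exact hA
    · exact (Finset.mem_filter.mp hB).1
  have := Finset.sum_le_sum_of_subset_of_nonneg hsub
    (fun B _ _ => Lb_nonneg φ a b ha hb B)
  rw [Finset.sum_insert hnot] at this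
  linarith

lemma piece_subset_block (ha : ∀ k, a k < 0) (hb : ∀ k, 0 < b k) {A : Finset (Fin n)}
    {t : ℕ} (ht : t < NA A) :
    piece φ a b M A t ⊆ Set.Ico (st φ a b M A) (st φ a b M A + Lb φ a b A) := by
  apply Set.Ico_subset_Ico
  · have := mul_nonneg (Nat.cast_nonneg t : (0:ℝ) ≤ t) (len_nonneg φ a b ha hb A)
    linarith
  · have h1 : ((t:ℝ) + 1) ≤ (NA A : ℝ) := by exact_mod_cast ht
    have h2 : ((t:ℝ) + 1) * len φ a b A ≤ (NA A : ℝ) * len φ a b A :=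
      mul_le_mul_of_nonneg_right h1 (len_nonneg φ a b ha hb A)
    rw [NA_mul_len] at h2
    linarith

lemma piece_subset_ext (ha : ∀ k, a k < 0) (hb : ∀ k, 0 < b k) {A : Finset (Fin n)}
    (hA : A ∈ M) {t : ℕ} (ht : t < NA A) :
    piece φ a b M A t ⊆ Set.Ico (1:ℝ) (1 + ∑ B ∈ M, Lb φ a b B) := by
  refine (piece_subset_block φ a b M ha hb ht).trans (Set.Ico_subset_Ico ?_ ?_)
  · exact st_ge_one φ a b M ha hb A
  · exact block_hi_le φ a b M ha hb hA

lemma pieces_disjoint (ha : ∀ k, a k < 0) (hb : ∀ k, 0 < b k) {A A' : Finset (Fin n)}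
    (hA : A ∈ M) (hA' : A' ∈ M) {t t' : ℕ} (ht : t < NA A) (ht' : t' < NA A')
    (hne : A ≠ A' ∨ t ≠ t') :
    Disjoint (piece φ a b M A t) (piece φ a b M A' t') := by
  by_cases hAA : A = A'
  · subst hAA
    have htt : t ≠ t' := by tauto
    rw [piece, piece, Set.Ico_disjoint_Ico]
    rcases lt_or_gt_of_ne htt with h | h
    · have h1 : ((t:ℝ) + 1) ≤ (t' : ℝ) := by exact_mod_cast h
      have := mul_le_mul_of_nonneg_right h1 (len_nonneg φ a b ha hb A)
      refine le_trans (min_le_left _ _) (le_trans (by linarith) (le_max_right _ _))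
    · have h1 : ((t':ℝ) + 1) ≤ (t : ℝ) := by exact_mod_cast h
      have := mul_le_mul_of_nonneg_right h1 (len_nonneg φ a b ha hb A)
      refine le_trans (min_le_right _ _) (le_trans (by linarith) (le_max_left _ _))
  · have hkey : key A ≠ key A' := fun h => hAA (key_inj h)
    have hblock : Disjoint (Set.Ico (st φ a b M A) (st φ a b M A + Lb φ a b A))
        (Set.Ico (st φ a b M A') (st φ a b M A' + Lb φ a b A')) := by
      rw [Set.Ico_disjoint_Ico]
      rcases lt_or_gt_of_ne hkey with h | h
      · have := block_le φ a b M ha hb hA h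
        exact le_trans (min_le_left _ _) (le_trans this (le_max_right _ _))
      · have := block_le φ a b M ha hb hA' h
        exact le_trans (min_le_right _ _) (le_trans this (le_max_left _ _))
    exact Set.disjoint_of_subset (piece_subset_block φ a b M ha hb ht)
      (piece_subset_block φ a b M ha hb ht') hblock

end Basic

section Eval

variable (φ : Fin n → ℝ → ℝ) (a b : Fin n → ℝ) (M : Finset (Finset (Fin n)))

lemma sum_ind_eval_mem (ha : ∀ k, a k < 0) (hb : ∀ k, 0 < b k)
    (f : Finset (Fin n) → ℕ → ℝ) {A₀ : Finset (Fin n)} {t₀ : ℕ} {x : ℝ}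
    (hA₀ : A₀ ∈ M) (ht₀ : t₀ < NA A₀) (hx : x ∈ piece φ a b M A₀ t₀) :
    ∑ A ∈ M, ∑ t ∈ Finset.range (NA A),
      f A t * (piece φ a b M A t).indicator (fun _ => (1:ℝ)) x = f A₀ t₀ := by
  rw [Finset.sum_eq_single_of_mem A₀ hA₀ ?_]
  · rw [Finset.sum_eq_single_of_mem t₀ (Finset.mem_range.mpr ht₀) ?_]
    · rw [Set.indicator_of_mem hx]; ring
    · intro t ht hne
      have hdisj := pieces_disjoint φ a b M ha hb hA₀ hA₀ (Finset.mem_range.mp ht) ht₀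
        (Or.inr hne)
      rw [Set.indicator_of_notMem (Set.disjoint_right.mp hdisj hx), mul_zero]
  · intro A hA hne
    refine Finset.sum_eq_zero fun t ht => ?_
    have hdisj := pieces_disjoint φ a b M ha hb hA hA₀ (Finset.mem_range.mp ht) ht₀
      (Or.inl hne)
    rw [Set.indicator_of_notMem (Set.disjoint_right.mp hdisj hx), mul_zero]

lemma sum_ind_eval_not (f : Finset (Fin n) → ℕ → ℝ) {x : ℝ}
    (hx : ∀ A ∈ M, ∀ t < NA A, x ∉ piece φ a b M A t) :
    ∑ A ∈ M, ∑ t ∈ Finset.range (NA A),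
      f A t * (piece φ a b M A t).indicator (fun _ => (1:ℝ)) x = 0 := by
  refine Finset.sum_eq_zero fun A hA => Finset.sum_eq_zero fun t ht => ?_
  rw [Set.indicator_of_notMem (hx A hA t (Finset.mem_range.mp ht)), mul_zero]

lemma step_eq_of_mem (ha : ∀ k, a k < 0) (hb : ∀ k, 0 < b k) (k : Fin n)
    {A₀ : Finset (Fin n)} {t₀ : ℕ} {x : ℝ}
    (hA₀ : A₀ ∈ M) (ht₀ : t₀ < NA A₀) (hx : x ∈ piece φ a b M A₀ t₀) :
    step φ a b M k x = vl φ a b k A₀ t₀ :=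
  sum_ind_eval_mem φ a b M ha hb (vl φ a b k) hA₀ ht₀ hx

lemma step_eq_zero (k : Fin n) {x : ℝ}
    (hx : ∀ A ∈ M, ∀ t < NA A, x ∉ piece φ a b M A t) :
    step φ a b M k x = 0 :=
  sum_ind_eval_not φ a b M (vl φ a b k) hx

lemma not_mem_piece_of_lt_one (ha : ∀ k, a k < 0) (hb : ∀ k, 0 < b k) {x : ℝ} (hx : x < 1)
    (A : Finset (Fin n)) (t : ℕ) : x ∉ piece φ a b M A t := by
  intro hmem
  have h1 : st φ a b M A + t * len φ a b A ≤ x := hmem.1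
  have h2 : 1 ≤ st φ a b M A := st_ge_one φ a b M ha hb A
  have h3 : 0 ≤ (t : ℝ) * len φ a b A :=
    mul_nonneg (Nat.cast_nonneg t) (len_nonneg φ a b ha hb A)
  linarith

lemma step_eq_zero_of_lt_one (ha : ∀ k, a k < 0) (hb : ∀ k, 0 < b k) (k : Fin n) {x : ℝ}
    (hx : x < 1) : step φ a b M k x = 0 :=
  step_eq_zero φ a b M k fun A _ t _ => not_mem_piece_of_lt_one φ a b M ha hb hx A t

lemma sg_pm (A : Finset (Fin n)) : sg φ A = 1 ∨ sg φ A = -1 := by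
  unfold sg; split <;> simp

lemma pm_mul {x y : ℝ} (hx : x = 1 ∨ x = -1) (hy : y = 1 ∨ y = -1) :
    x * y = 1 ∨ x * y = -1 := by
  rcases hx with rfl | rfl <;> rcases hy with rfl | rfl <;> norm_num

lemma sgm_pm (A : Finset (Fin n)) (t : ℕ) (k : Fin n) :
    sgm φ A t k = 1 ∨ sgm φ A t k = -1 := by
  refine pm_mul (eps_pm _ _) ?_
  split
  · refine pm_mul ?_ (prod_eps_pm _ _)
    rcases sg_pm φ A with h | h <;> rw [h] <;> norm_num
  · exact Or.inl rfl

lemma vl_bound (ha : ∀ k, a k < 0) (hb : ∀ k, 0 < b k) (k : Fin n) (A : Finset (Fin n))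
    (t : ℕ) : a k ≤ vl φ a b k A t ∧ vl φ a b k A t ≤ b k := by
  have hC := Cc_pos a b ha hb k
  have h1 : Cc a b k ≤ -(a k) := min_le_left _ _
  have h2 : Cc a b k ≤ b k := min_le_right _ _
  unfold vl
  split
  · rcases sgm_pm φ A t k with h | h <;> rw [h] <;> constructor <;> nlinarith [ha k, hb k]
  · exact ⟨(ha k).le, (hb k).le⟩

end Eval

section Rank

variable (φ : Fin n → ℝ → ℝ)

lemma rk_lt {A : Finset (Fin n)} {k : Fin n} (h : k ∈ A) : rk A k < A.card := by
  rw [rk, dif_pos h]; exact (A.equivFin ⟨k, h⟩).isLt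

lemma rk_injOn {A : Finset (Fin n)} {k k' : Fin n} (hk : k ∈ A) (hk' : k' ∈ A)
    (h : rk A k = rk A k') : k = k' := by
  rw [rk, dif_pos hk, rk, dif_pos hk'] at h
  have := A.equivFin.injective (Fin.val_injective h)
  exact Subtype.mk_eq_mk.mp this

noncomputable def k0 (A : Finset (Fin n)) (hm : 0 < A.card) : Fin n :=
  (A.equivFin.symm ⟨0, hm⟩ : {x // x ∈ A}).1

lemma k0_mem (A : Finset (Fin n)) (hm : 0 < A.card) : k0 A hm ∈ A :=
  (A.equivFin.symm ⟨0, hm⟩).2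

lemma rk_k0 (A : Finset (Fin n)) (hm : 0 < A.card) : rk A (k0 A hm) = 0 := by
  rw [rk, dif_pos (k0_mem A hm)]
  have h : (⟨k0 A hm, k0_mem A hm⟩ : {x // x ∈ A}) = A.equivFin.symm ⟨0, hm⟩ :=
    Subtype.ext rfl
  rw [h, Equiv.apply_symm_apply]

lemma rk_eq_zero_iff {A : Finset (Fin n)} (hm : 0 < A.card) {k : Fin n} (hk : k ∈ A) :
    rk A k = 0 ↔ k = k0 A hm := by
  constructor
  · intro h
    exact rk_injOn hk (k0_mem A hm) (h.trans (rk_k0 A hm).symm)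
  · rintro rfl
    exact rk_k0 A hm

lemma image_rk_subset {A S : Finset (Fin n)} (hS : S ⊆ A) :
    S.image (rk A) ⊆ Finset.range A.card := by
  intro i hi
  rcases Finset.mem_image.mp hi with ⟨k, hk, rfl⟩
  exact Finset.mem_range.mpr (rk_lt (hS hk))

lemma image_rk_self (A : Finset (Fin n)) : A.image (rk A) = Finset.range A.card := by
  refine Finset.eq_of_subset_of_card_le (image_rk_subset (subset_refl A)) ?_
  rw [Finset.card_range, Finset.card_image_of_injOn]
  intro x hx y hy h
  exact rk_injOn (Finset.mem_coe.mp hx) (Finset.mem_coe.mp hy) h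

lemma prod_sgm_eq {A S : Finset (Fin n)} (hm : 0 < A.card) (hS : S ⊆ A) (t : ℕ) :
    ∏ k ∈ S, sgm φ A t k =
      if k0 A hm ∈ S then
        -(sg φ A) * ∏ i ∈ Finset.range A.card \ S.image (rk A), eps t i
      else ∏ i ∈ S.image (rk A), eps t i := by
  have hinj : ∀ x ∈ S, ∀ y ∈ S, rk A x = rk A y → x = y := fun x hx y hy h =>
    rk_injOn (hS hx) (hS hy) h
  have h1 : ∏ k ∈ S, sgm φ A t k =
      (∏ k ∈ S, eps t (rk A k)) *
        ∏ k ∈ S, (if rk A k = 0 then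
          -(sg φ A) * ∏ i ∈ Finset.range A.card, eps t i else 1) := by
    rw [← Finset.prod_mul_distrib]; rfl
  rw [h1, ← Finset.prod_image hinj]
  by_cases hk0 : k0 A hm ∈ S
  · rw [if_pos hk0]
    have h2 : (∏ k ∈ S, (if rk A k = 0 then
        -(sg φ A) * ∏ i ∈ Finset.range A.card, eps t i else 1))
        = -(sg φ A) * ∏ i ∈ Finset.range A.card, eps t i := by
      rw [← Finset.mul_prod_erase S _ hk0]
      have hz : rk A (k0 A hm) = 0 := rk_k0 A hm
      rw [if_pos hz]
      have hrest : (∏ x ∈ S.erase (k0 A hm), (if rk A x = 0 then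
          -(sg φ A) * ∏ i ∈ Finset.range A.card, eps t i else 1)) = 1 := by
        refine Finset.prod_eq_one fun k hk => ?_
        have hkS : k ∈ S := Finset.mem_of_mem_erase hk
        have hkne : k ≠ k0 A hm := Finset.ne_of_mem_erase hk
        rw [if_neg]
        intro h0
        exact hkne ((rk_eq_zero_iff hm (hS hkS)).mp h0)
      rw [hrest, mul_one]
    rw [h2]
    have hTsub : S.image (rk A) ⊆ Finset.range A.card := image_rk_subset hS
    have h3 : (∏ i ∈ Finset.range A.card \ S.image (rk A), eps t i) *
        ∏ i ∈ S.image (rk A), eps t i = ∏ i ∈ Finset.range A.card, eps t i :=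
      Finset.prod_sdiff hTsub
    calc (∏ i ∈ S.image (rk A), eps t i) *
          (-(sg φ A) * ∏ i ∈ Finset.range A.card, eps t i)
        = -(sg φ A) * ((∏ i ∈ Finset.range A.card \ S.image (rk A), eps t i) *
            ((∏ i ∈ S.image (rk A), eps t i) * (∏ i ∈ S.image (rk A), eps t i))) := by
          rw [← h3]; ring
      _ = -(sg φ A) * ∏ i ∈ Finset.range A.card \ S.image (rk A), eps t i := by
          rw [prod_eps_sq]; ring
  · rw [if_neg hk0]
    have h2 : (∏ k ∈ S, (if rk A k = 0 then
        -(sg φ A) * ∏ i ∈ Finset.range A.card, eps t i else 1)) = 1 := by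
      refine Finset.prod_eq_one fun k hk => ?_
      rw [if_neg]
      intro h0
      exact hk0 (((rk_eq_zero_iff hm (hS hk)).mp h0) ▸ hk)
    rw [h2, mul_one]

lemma prod_sgm_self {A : Finset (Fin n)} (hA : A.Nonempty) (t : ℕ) :
    ∏ k ∈ A, sgm φ A t k = -(sg φ A) := by
  have hm := Finset.card_pos.mpr hA
  rw [prod_sgm_eq φ hm (subset_refl A) t, if_pos (k0_mem A hm), image_rk_self,
    Finset.sdiff_self, Finset.prod_empty, mul_one]

lemma sum_prod_sgm {A S : Finset (Fin n)} (hS : S ⊆ A) (hSne : S.Nonempty) (hne : S ≠ A) :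
    ∑ t ∈ Finset.range (NA A), ∏ k ∈ S, sgm φ A t k = 0 := by
  obtain ⟨x0, hx0⟩ := hSne
  have hm : 0 < A.card := Finset.card_pos.mpr ⟨x0, hS hx0⟩
  rw [Finset.sum_congr rfl (fun t _ => prod_sgm_eq φ hm hS t)]
  by_cases hk0 : k0 A hm ∈ S
  · simp only [if_pos hk0]
    rw [← Finset.mul_sum]
    have hU : (Finset.range A.card \ S.image (rk A)).Nonempty := by
      have hinj2 : Set.InjOn (rk A) S := fun x hx y hy h =>
        rk_injOn (hS (Finset.mem_coe.mp hx)) (hS (Finset.mem_coe.mp hy)) h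
      have hcard : (S.image (rk A)).card < A.card := by
        rw [Finset.card_image_of_injOn hinj2]
        exact Finset.card_lt_card (HasSubset.Subset.ssubset_of_ne hS hne)
      rw [← Finset.card_pos, Finset.card_sdiff_of_subset (image_rk_subset hS), Finset.card_range]
      omega
    rw [show NA A = 2 ^ A.card from rfl,
      walsh_sum A.card _ hU
        (fun i hi => Finset.mem_range.mp (Finset.mem_sdiff.mp hi).1), mul_zero]
  · simp only [if_neg hk0]
    rw [show NA A = 2 ^ A.card from rfl]
    exact walsh_sum A.card _ ⟨rk A x0, Finset.mem_image_of_mem _ hx0⟩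
      (fun i hi => Finset.mem_range.mp (image_rk_subset hS hi))

end Rank

section Meas

variable (φ : Fin n → ℝ → ℝ) (a b : Fin n → ℝ) (M : Finset (Finset (Fin n)))

lemma indicator_phi_measurable (k : Fin n)
    (hφ : Measurable (fun x : Set.Ico (0:ℝ) 1 => φ k x.1)) :
    Measurable ((Set.Ico (0:ℝ) 1).indicator (φ k)) := by
  have hs : MeasurableSet (Set.Ico (0:ℝ) 1) := measurableSet_Ico
  have hemb : MeasurableEmbedding (Subtype.val : Set.Ico (0:ℝ) 1 → ℝ) :=
    MeasurableEmbedding.subtype_coe hs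
  have hext := hemb.measurable_extend hφ (measurable_const : Measurable fun _ : ℝ => (0:ℝ))
  have heq : (Set.Ico (0:ℝ) 1).indicator (φ k) =
      Function.extend (Subtype.val : Set.Ico (0:ℝ) 1 → ℝ)
        (fun x : Set.Ico (0:ℝ) 1 => φ k x.1) (fun _ => 0) := by
    funext x
    by_cases hx : x ∈ Set.Ico (0:ℝ) 1
    · rw [Set.indicator_of_mem hx]
      exact (Subtype.val_injective.extend_apply
        (fun x : Set.Ico (0:ℝ) 1 => φ k x.1) (fun _ => (0:ℝ)) ⟨x, hx⟩).symm
    · rw [Set.indicator_of_notMem hx, Function.extend_apply']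
      rintro ⟨y, rfl⟩
      exact hx y.2
  rw [heq]; exact hext

lemma step_measurable (k : Fin n) : Measurable (step φ a b M k) := by
  apply Finset.measurable_sum
  intro A _
  apply Finset.measurable_sum
  intro t _
  exact ((measurable_const.indicator
    (measurableSet_Ico : MeasurableSet (piece φ a b M A t)))).const_mul _

lemma psi_measurable (k : Fin n)
    (hφ : Measurable (fun x : Set.Ico (0:ℝ) 1 => φ k x.1)) :
    Measurable (psi φ a b M k) :=
  (indicator_phi_measurable φ k hφ).add (step_measurable φ a b M k)

lemma psi_eq_phi (ha : ∀ k, a k < 0) (hb : ∀ k, 0 < b k) (k : Fin n) {x : ℝ}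
    (hx : x ∈ Set.Ico (0:ℝ) 1) : psi φ a b M k x = φ k x := by
  rw [psi, Set.indicator_of_mem hx, step_eq_zero_of_lt_one φ a b M ha hb k hx.2, add_zero]

lemma psi_eq_step (k : Fin n) {x : ℝ} (hx : (1:ℝ) ≤ x) :
    psi φ a b M k x = step φ a b M k x := by
  rw [psi, Set.indicator_of_notMem, zero_add]
  intro h
  linarith [h.2]

lemma psi_bound (ha : ∀ k, a k < 0) (hb : ∀ k, 0 < b k)
    (hbound : ∀ k, ∀ x ∈ Set.Ico (0:ℝ) 1, a k ≤ φ k x ∧ φ k x ≤ b k)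
    (k : Fin n) (x : ℝ) : a k ≤ psi φ a b M k x ∧ psi φ a b M k x ≤ b k := by
  by_cases hx1 : x < 1
  · by_cases hx0 : x ∈ Set.Ico (0:ℝ) 1
    · rw [psi_eq_phi φ a b M ha hb k hx0]
      exact hbound k x hx0
    · have : psi φ a b M k x = 0 := by
        rw [psi, Set.indicator_of_notMem hx0,
          step_eq_zero_of_lt_one φ a b M ha hb k hx1, add_zero]
      rw [this]
      exact ⟨(ha k).le, (hb k).le⟩
  · push_neg at hx1
    rw [psi_eq_step φ a b M k hx1]
    by_cases hp : ∃ A, A ∈ M ∧ ∃ t, t < NA A ∧ x ∈ piece φ a b M A t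
    · obtain ⟨A₀, hA₀, t₀, ht₀, hxp⟩ := hp
      rw [step_eq_of_mem φ a b M ha hb k hA₀ ht₀ hxp]
      exact vl_bound φ a b ha hb k A₀ t₀
    · push_neg at hp
      rw [step_eq_zero φ a b M k (fun A hA t ht => hp A hA t ht)]
      exact ⟨(ha k).le, (hb k).le⟩

lemma psi_abs_le (ha : ∀ k, a k < 0) (hb : ∀ k, 0 < b k)
    (hbound : ∀ k, ∀ x ∈ Set.Ico (0:ℝ) 1, a k ≤ φ k x ∧ φ k x ≤ b k)
    (k : Fin n) (x : ℝ) : |psi φ a b M k x| ≤ max (-(a k)) (b k) := by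
  obtain ⟨h1, h2⟩ := psi_bound φ a b M ha hb hbound k x
  rw [abs_le]
  constructor
  · have := le_max_left (-(a k)) (b k)
    linarith
  · exact h2.trans (le_max_right _ _)

lemma integrableOn_prod_psi (ha : ∀ k, a k < 0) (hb : ∀ k, 0 < b k)
    (hbound : ∀ k, ∀ x ∈ Set.Ico (0:ℝ) 1, a k ≤ φ k x ∧ φ k x ≤ b k)
    (hφmeas : ∀ k, Measurable (fun x : Set.Ico (0:ℝ) 1 => φ k x.1))
    (A' : Finset (Fin n)) (s : Set ℝ) (hvol : volume s < ⊤) :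
    IntegrableOn (fun x => ∏ j ∈ A', psi φ a b M j x) s := by
  refine Integrable.mono' (g := fun _ => ∏ j ∈ A', max (-(a j)) (b j))
    (integrableOn_const hvol.ne) ?_ ?_
  · exact (Finset.measurable_prod A' fun j _ =>
      psi_measurable φ a b M j (hφmeas j)).aestronglyMeasurable
  · filter_upwards with x
    rw [Real.norm_eq_abs, Finset.abs_prod]
    exact Finset.prod_le_prod (fun j _ => abs_nonneg _)
      (fun j _ => psi_abs_le φ a b M ha hb hbound j x)

end Meas

section IntegralPart

variable (φ : Fin n → ℝ → ℝ) (a b : Fin n → ℝ) (M : Finset (Finset (Fin n)))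

lemma mul_indicator_eq (c : ℝ) (s : Set ℝ) :
    (fun x => c * s.indicator (fun _ => (1:ℝ)) x) = s.indicator (fun _ => c) := by
  funext x
  by_cases hx : x ∈ s
  · rw [Set.indicator_of_mem hx, Set.indicator_of_mem hx, mul_one]
  · rw [Set.indicator_of_notMem hx, Set.indicator_of_notMem hx, mul_zero]

lemma base_integrable (c : ℝ) (A : Finset (Fin n)) (t : ℕ) (s : Set ℝ) :
    Integrable (fun x => c * (piece φ a b M A t).indicator (fun _ => (1:ℝ)) x)
      (volume.restrict s) := by
  rw [mul_indicator_eq]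
  unfold piece
  rw [integrable_indicator_iff measurableSet_Ico]
  refine integrableOn_const (ne_of_lt ?_)
  refine lt_of_le_of_lt (Measure.restrict_apply_le s _) ?_
  rw [Real.volume_Ico]
  exact ENNReal.ofReal_lt_top

lemma base_integral (ha : ∀ k, a k < 0) (hb : ∀ k, 0 < b k) (c : ℝ)
    {A : Finset (Fin n)} (hA : A ∈ M) {t : ℕ} (ht : t < NA A) :
    ∫ x in Set.Ico (1:ℝ) (1 + ∑ B ∈ M, Lb φ a b B),
      c * (piece φ a b M A t).indicator (fun _ => (1:ℝ)) x = c * len φ a b A := by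
  rw [mul_indicator_eq]
  have hsub := piece_subset_ext φ a b M ha hb hA ht
  unfold piece at hsub ⊢
  rw [setIntegral_indicator measurableSet_Ico,
    Set.inter_eq_self_of_subset_right hsub,
    setIntegral_const, measureReal_def, Real.volume_Ico,
    show st φ a b M A + ((t:ℝ) + 1) * len φ a b A - (st φ a b M A + (t:ℝ) * len φ a b A)
      = len φ a b A by ring,
    ENNReal.toReal_ofReal (len_nonneg φ a b ha hb A), smul_eq_mul, mul_comm]

lemma integral_step_part (ha : ∀ k, a k < 0) (hb : ∀ k, 0 < b k)
    (hM : ∀ A ∈ M, A.Nonempty) {A' : Finset (Fin n)} (hA' : A' ∈ M) :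
    ∫ x in Set.Ico (1:ℝ) (1 + ∑ B ∈ M, Lb φ a b B), ∏ j ∈ A', psi φ a b M j x
      = -(Iv φ A') := by
  have hEq : Set.EqOn (fun x => ∏ j ∈ A', psi φ a b M j x)
      (fun x => ∑ A ∈ M, ∑ t ∈ Finset.range (NA A),
        (∏ j ∈ A', vl φ a b j A t) * (piece φ a b M A t).indicator (fun _ => (1:ℝ)) x)
      (Set.Ico (1:ℝ) (1 + ∑ B ∈ M, Lb φ a b B)) := by
    intro x hx
    have hx1 : (1:ℝ) ≤ x := hx.1
    by_cases hp : ∃ A, A ∈ M ∧ ∃ t, t < NA A ∧ x ∈ piece φ a b M A t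
    · obtain ⟨A₀, hA₀, t₀, ht₀, hxp⟩ := hp
      simp only
      rw [sum_ind_eval_mem φ a b M ha hb (fun A t => ∏ j ∈ A', vl φ a b j A t) hA₀ ht₀ hxp]
      refine Finset.prod_congr rfl fun j _ => ?_
      rw [psi_eq_step φ a b M j hx1, step_eq_of_mem φ a b M ha hb j hA₀ ht₀ hxp]
    · push_neg at hp
      simp only
      rw [sum_ind_eval_not φ a b M _ (fun A hA t ht => hp A hA t ht)]
      obtain ⟨j₀, hj₀⟩ := hM A' hA'
      refine Finset.prod_eq_zero hj₀ ?_
      rw [psi_eq_step φ a b M j₀ hx1, step_eq_zero φ a b M j₀ (fun A hA t ht => hp A hA t ht)]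
  rw [setIntegral_congr_fun measurableSet_Ico hEq]
  rw [integral_finset_sum M (fun A _ => integrable_finset_sum _
    (fun t _ => base_integrable φ a b M _ A t _))]
  have hterm : ∀ A ∈ M, (∑ t ∈ Finset.range (NA A), ∫ x in
      Set.Ico (1:ℝ) (1 + ∑ B ∈ M, Lb φ a b B),
      (∏ j ∈ A', vl φ a b j A t) * (piece φ a b M A t).indicator (fun _ => (1:ℝ)) x)
      = ∑ t ∈ Finset.range (NA A), (∏ j ∈ A', vl φ a b j A t) * len φ a b A := by
    intro A hA
    refine Finset.sum_congr rfl fun t ht => ?_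
    exact base_integral φ a b M ha hb _ hA (Finset.mem_range.mp ht)
  rw [Finset.sum_congr rfl (fun A hA => by
    rw [integral_finset_sum _ (fun t _ => base_integrable φ a b M _ A t _), hterm A hA])]
  -- now evaluate the double sum
  rw [Finset.sum_eq_single_of_mem A' hA' ?_]
  · -- diagonal term
    have hprod : ∀ t, ∏ j ∈ A', vl φ a b j A' t
        = (∏ j ∈ A', Cc a b j) * ∏ j ∈ A', sgm φ A' t j := by
      intro t
      rw [← Finset.prod_mul_distrib]
      exact Finset.prod_congr rfl fun j hj => by rw [vl, if_pos hj]
    have hsgm : ∀ t, ∏ j ∈ A', sgm φ A' t j = -(sg φ A') :=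
      fun t => prod_sgm_self φ (hM A' hA') t
    have hCprod : (∏ j ∈ A', Cc a b j) * (∏ j ∈ A', (Cc a b j)⁻¹) = 1 := by
      rw [← Finset.prod_mul_distrib]
      exact Finset.prod_eq_one fun j _ => mul_inv_cancel₀ (Cc_pos a b ha hb j).ne'
    have hsg : sg φ A' * |Iv φ A'| = Iv φ A' := by
      by_cases h : 0 ≤ Iv φ A'
      · rw [sg, if_pos h, one_mul, abs_of_nonneg h]
      · rw [sg, if_neg h, abs_of_neg (lt_of_not_ge h)]; ring
    calc ∑ t ∈ Finset.range (NA A'), (∏ j ∈ A', vl φ a b j A' t) * len φ a b A'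
        = ∑ t ∈ Finset.range (NA A'),
            ((∏ j ∈ A', Cc a b j) * -(sg φ A')) * len φ a b A' := by
          refine Finset.sum_congr rfl fun t _ => ?_
          rw [hprod t, hsgm t]
      _ = (NA A' : ℝ) * (((∏ j ∈ A', Cc a b j) * -(sg φ A')) * len φ a b A') := by
          rw [Finset.sum_const, Finset.card_range, nsmul_eq_mul]
      _ = ((∏ j ∈ A', Cc a b j) * -(sg φ A')) * ((NA A' : ℝ) * len φ a b A') := by ring
      _ = ((∏ j ∈ A', Cc a b j) * -(sg φ A')) * Lb φ a b A' := by
          rw [NA_mul_len]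
      _ = -(sg φ A' * |Iv φ A'|) *
            ((∏ j ∈ A', Cc a b j) * (∏ j ∈ A', (Cc a b j)⁻¹)) := by
          rw [Lb]; ring
      _ = -(Iv φ A') := by rw [hsg, hCprod, mul_one]
  · -- off-diagonal terms vanish
    intro A hA hne
    by_cases hsub : A' ⊆ A
    · have hprod : ∀ t, ∏ j ∈ A', vl φ a b j A t
          = (∏ j ∈ A', Cc a b j) * ∏ j ∈ A', sgm φ A t j := by
        intro t
        rw [← Finset.prod_mul_distrib]
        exact Finset.prod_congr rfl fun j hj => by rw [vl, if_pos (hsub hj)]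
      calc ∑ t ∈ Finset.range (NA A), (∏ j ∈ A', vl φ a b j A t) * len φ a b A
          = ∑ t ∈ Finset.range (NA A),
              ((∏ j ∈ A', Cc a b j) * len φ a b A) * ∏ j ∈ A', sgm φ A t j := by
            refine Finset.sum_congr rfl fun t _ => ?_
            rw [hprod t]; ring
        _ = ((∏ j ∈ A', Cc a b j) * len φ a b A) *
              ∑ t ∈ Finset.range (NA A), ∏ j ∈ A', sgm φ A t j := by
            rw [Finset.mul_sum]
        _ = 0 := by
            rw [sum_prod_sgm φ hsub (hM A' hA') (Ne.symm hne), mul_zero]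
    · obtain ⟨j₀, hj₀A', hj₀A⟩ := Finset.not_subset.mp hsub
      refine Finset.sum_eq_zero fun t _ => ?_
      rw [Finset.prod_eq_zero hj₀A' (show vl φ a b j₀ A t = 0 by rw [vl, if_neg hj₀A]),
        zero_mul]

end IntegralPart

section StepFn

variable (φ : Fin n → ℝ → ℝ) (a b : Fin n → ℝ) (M : Finset (Finset (Fin n)))

lemma psi_isStepFunction (ha : ∀ k, a k < 0) (hb : ∀ k, 0 < b k) (k : Fin n) :
    IsStepFunction (psi φ a b M k) 1 (1 + ∑ B ∈ M, Lb φ a b B) := by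
  classical
  let J := (Σ A : {A : Finset (Fin n) // A ∈ M}, Fin (NA A.1))
  let e := Fintype.equivFin J
  refine ⟨Fintype.card J,
    fun i => vl φ a b k (e.symm i).1.1 (((e.symm i).2 : ℕ)),
    fun i => st φ a b M (e.symm i).1.1 + (((e.symm i).2 : ℕ) : ℝ) * len φ a b (e.symm i).1.1,
    fun i => st φ a b M (e.symm i).1.1 +
      ((((e.symm i).2 : ℕ) : ℝ) + 1) * len φ a b (e.symm i).1.1,
    ?_, ?_⟩
  · intro i
    set A := (e.symm i).1.1 with hA
    have hAM : A ∈ M := (e.symm i).1.2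
    set t : ℕ := ((e.symm i).2 : ℕ) with htdef
    have ht : t < NA A := (e.symm i).2.isLt
    refine ⟨?_, ?_⟩
    · show (1:ℝ) ≤ st φ a b M A + (t : ℝ) * len φ a b A
      have h1 := st_ge_one φ a b M ha hb A
      have h2 : 0 ≤ (t : ℝ) * len φ a b A :=
        mul_nonneg (Nat.cast_nonneg t) (len_nonneg φ a b ha hb A)
      linarith
    · show st φ a b M A + ((t:ℝ) + 1) * len φ a b A ≤ 1 + ∑ B ∈ M, Lb φ a b B
      have h1 : ((t:ℝ) + 1) ≤ (NA A : ℝ) := by exact_mod_cast ht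
      have h2 : ((t:ℝ) + 1) * len φ a b A ≤ (NA A : ℝ) * len φ a b A :=
        mul_le_mul_of_nonneg_right h1 (len_nonneg φ a b ha hb A)
      rw [NA_mul_len] at h2
      have h3 := block_hi_le φ a b M ha hb hAM
      linarith
  · intro x hx
    have hx1 : (1:ℝ) ≤ x := hx.1
    rw [psi_eq_step φ a b M k hx1, step]
    have hstep1 : ∑ A ∈ M, ∑ t ∈ Finset.range (NA A),
        vl φ a b k A t * (piece φ a b M A t).indicator (fun _ => (1:ℝ)) x
        = ∑ A : {A : Finset (Fin n) // A ∈ M}, ∑ t : Fin (NA A.1),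
          vl φ a b k A.1 (t : ℕ) *
            (piece φ a b M A.1 (t : ℕ)).indicator (fun _ => (1:ℝ)) x := by
      rw [← Finset.sum_coe_sort M]
      refine Finset.sum_congr rfl fun A _ => ?_
      rw [Fin.sum_univ_eq_sum_range (fun t => vl φ a b k A.1 t *
        (piece φ a b M A.1 t).indicator (fun _ => (1:ℝ)) x)]
    have hstep2 : ∑ A : {A : Finset (Fin n) // A ∈ M}, ∑ t : Fin (NA A.1),
          vl φ a b k A.1 (t : ℕ) *
            (piece φ a b M A.1 (t : ℕ)).indicator (fun _ => (1:ℝ)) x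
        = ∑ p : J, vl φ a b k p.1.1 ((p.2 : ℕ)) *
            (piece φ a b M p.1.1 ((p.2 : ℕ))).indicator (fun _ => (1:ℝ)) x := by
      rw [← Finset.univ_sigma_univ, Finset.sum_sigma]
    have hstep3 : ∑ p : J, vl φ a b k p.1.1 ((p.2 : ℕ)) *
            (piece φ a b M p.1.1 ((p.2 : ℕ))).indicator (fun _ => (1:ℝ)) x
        = ∑ i : Fin (Fintype.card J), vl φ a b k (e.symm i).1.1 (((e.symm i).2 : ℕ)) *
            (piece φ a b M (e.symm i).1.1 (((e.symm i).2 : ℕ))).indicator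
              (fun _ => (1:ℝ)) x := by
      exact (Equiv.sum_comp e.symm (fun p : J => vl φ a b k p.1.1 ((p.2 : ℕ)) *
        (piece φ a b M p.1.1 ((p.2 : ℕ))).indicator (fun _ => (1:ℝ)) x)).symm
    rw [hstep1, hstep2, hstep3]
    rfl

end StepFn
end ExtLem

/-- Lemma 2.2 of \[Kar4\]. Measurable functions `φ_k` on `[0,1)` with
`A_k ≤ φ_k ≤ B_k`, `A_k < 0 < B_k`, can be extended to `[0, 1+μ)`, where `μ = μ_M(φ)` is the
multiplicative error corresponding to an arbitrary family `M` of nonempty subsets of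
`{1, …, n}`, so that the bounds persist, `∫_0^{1+μ} ∏_{j∈A} φ_j = 0` for all `A ∈ M`, and each
extension is a step function on `[1, 1+μ)`. -/
theorem extension_lemma
    (n : ℕ) (φ : Fin n → ℝ → ℝ)
    (hφmeas : ∀ k, Measurable (fun x : Set.Ico (0:ℝ) 1 => φ k x.1))
    (a b : Fin n → ℝ) (ha : ∀ k, a k < 0) (hb : ∀ k, 0 < b k)
    (hbound : ∀ k, ∀ x ∈ Set.Ico (0:ℝ) 1, a k ≤ φ k x ∧ φ k x ≤ b k)
    (M : Finset (Finset (Fin n))) (hM : ∀ A ∈ M, A.Nonempty)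
    (μ : ℝ)
    (hμ : μ = ∑ A ∈ M, (∏ j ∈ A, (min (-(a j)) (b j))⁻¹) *
        |∫ x in Set.Ico (0:ℝ) 1, ∏ j ∈ A, φ j x|) :
    ∃ ψ : Fin n → ℝ → ℝ,
      (∀ k, ∀ x ∈ Set.Ico (0:ℝ) 1, ψ k x = φ k x) ∧
      (∀ k, Measurable (fun x : Set.Ico (0:ℝ) (1 + μ) => ψ k x.1)) ∧
      (∀ k, ∀ x ∈ Set.Ico (0:ℝ) (1 + μ), a k ≤ ψ k x ∧ ψ k x ≤ b k) ∧
      (∀ A ∈ M, ∫ x in Set.Ico (0:ℝ) (1 + μ), ∏ j ∈ A, ψ j x = 0) ∧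
      (∀ k, IsStepFunction (ψ k) 1 (1 + μ)) := by
  classical
  have hμt : μ = ∑ B ∈ M, ExtLem.Lb φ a b B := by rw [hμ]; rfl
  have hμ0 : 0 ≤ ∑ B ∈ M, ExtLem.Lb φ a b B :=
    Finset.sum_nonneg fun B _ => ExtLem.Lb_nonneg φ a b ha hb B
  refine ⟨ExtLem.psi φ a b M, ?_, ?_, ?_, ?_, ?_⟩
  · intro k x hx
    exact ExtLem.psi_eq_phi φ a b M ha hb k hx
  · intro k
    exact (ExtLem.psi_measurable φ a b M k (hφmeas k)).comp measurable_subtype_coe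
  · intro k x _
    exact ExtLem.psi_bound φ a b M ha hb hbound k x
  · intro A hA
    rw [hμt]
    have hsplit : Set.Ico (0:ℝ) (1 + ∑ B ∈ M, ExtLem.Lb φ a b B) =
        Set.Ico (0:ℝ) 1 ∪ Set.Ico (1:ℝ) (1 + ∑ B ∈ M, ExtLem.Lb φ a b B) := by
      rw [Set.Ico_union_Ico_eq_Ico (by norm_num) (by linarith)]
    have hdisj : Disjoint (Set.Ico (0:ℝ) 1)
        (Set.Ico (1:ℝ) (1 + ∑ B ∈ M, ExtLem.Lb φ a b B)) := by
      rw [Set.Ico_disjoint_Ico]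
      exact (min_le_left _ _).trans (le_max_right _ _)
    have hvol1 : volume (Set.Ico (0:ℝ) 1) < ⊤ := by
      rw [Real.volume_Ico]; exact ENNReal.ofReal_lt_top
    have hvol2 : volume (Set.Ico (1:ℝ) (1 + ∑ B ∈ M, ExtLem.Lb φ a b B)) < ⊤ := by
      rw [Real.volume_Ico]; exact ENNReal.ofReal_lt_top
    rw [hsplit, setIntegral_union hdisj measurableSet_Ico
      (ExtLem.integrableOn_prod_psi φ a b M ha hb hbound hφmeas A _ hvol1)
      (ExtLem.integrableOn_prod_psi φ a b M ha hb hbound hφmeas A _ hvol2)]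
    have h1 : ∫ x in Set.Ico (0:ℝ) 1, ∏ j ∈ A, ExtLem.psi φ a b M j x
        = ExtLem.Iv φ A := by
      refine setIntegral_congr_fun measurableSet_Ico fun x hx => ?_
      exact Finset.prod_congr rfl fun j _ => ExtLem.psi_eq_phi φ a b M ha hb j hx
    rw [h1, ExtLem.integral_step_part φ a b M ha hb hM hA]
    ring
  · intro k
    rw [hμt]
    exact ExtLem.psi_isStepFunction φ a b M ha hb k
end

section
/- Let f_1, …, f_n be real-valued step functions on [0,1) with A_k ≤ f_k(x) ≤ B_k, where A_k < 0 < B_k, and let G : ℝ^n → [0,∞) be convex in each variable separately. Then there exist step functions ξ_1, …, ξ_n on [0,1), each taking only the two values A_k and B_k, such that ∫_0^1 ξ_{n_1} ξ_{n_2} ⋯ ξ_{n_ν} = ∫_0^1 f_{n_1} f_{n_2} ⋯ f_{n_ν} for every nonempty subset {n_1, …, n_ν} ⊆ {1,…,n}, and ∫_0^1 G(f_1, …, f_n) ≤ ∫_0^1 G(ξ_1, …, ξ_n). -/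
open MeasureTheory

namespace TwoValuedAux

/-- Piecewise-constant representation of a vector-valued function on `[0,1)`. -/
def IsPC {n m : ℕ} (p : Fin (m + 1) → ℝ) (v : Fin m → Fin n → ℝ)
    (F : ℝ → Fin n → ℝ) : Prop :=
  Monotone p ∧ p 0 = 0 ∧ p (Fin.last m) = 1 ∧
    ∀ i : Fin m, ∀ x ∈ Set.Ico (p i.castSucc) (p i.succ), F x = v i

lemma pieces_disjoint {m : ℕ} {p : Fin (m + 1) → ℝ} (hp : Monotone p) :
    Pairwise (Function.onFun Disjoint
      (fun i : Fin m => Set.Ico (p i.castSucc) (p i.succ))) := by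
  have key : ∀ i j : Fin m, i < j →
      Disjoint (Set.Ico (p i.castSucc) (p i.succ)) (Set.Ico (p j.castSucc) (p j.succ)) := by
    intro i j h
    have h1 : p i.succ ≤ p j.castSucc := hp (by
      simp only [Fin.le_def, Fin.val_succ, Fin.coe_castSucc]
      exact h)
    exact Set.disjoint_left.2 fun x hx hx' =>
      absurd (hx.2.trans_le (h1.trans hx'.1)) (lt_irrefl x)
  intro i j hij
  rcases hij.lt_or_gt with h | h
  · exact key i j h
  · exact (key j i h).symm

lemma cover {m : ℕ} {p : Fin (m + 1) → ℝ} (hp : Monotone p)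
    (h0 : p 0 = 0) (h1 : p (Fin.last m) = 1) :
    Set.Ico (0 : ℝ) 1 = ⋃ i : Fin m, Set.Ico (p i.castSucc) (p i.succ) := by
  ext x
  simp only [Set.mem_iUnion, Set.mem_Ico]
  constructor
  · rintro ⟨hx0, hx1⟩
    classical
    have hne : (Finset.univ.filter (fun i : Fin (m + 1) => p i ≤ x)).Nonempty :=
      ⟨0, by simp [h0, hx0]⟩
    set i0 := Finset.max' _ hne with hi0
    have hmem : p i0 ≤ x := by
      have := Finset.max'_mem _ hne
      simpa using this
    have hlast : i0 ≠ Fin.last m := by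
      intro h
      rw [h, h1] at hmem
      exact absurd (lt_of_le_of_lt hmem hx1) (lt_irrefl 1)
    refine ⟨i0.castPred hlast, by rw [Fin.castSucc_castPred]; exact hmem, ?_⟩
    by_contra hcon
    push_neg at hcon
    have hmem2 : (i0.castPred hlast).succ ∈
        Finset.univ.filter (fun i : Fin (m + 1) => p i ≤ x) := by
      simp [hcon]
    have hle := Finset.le_max' _ _ hmem2
    rw [← hi0] at hle
    have : i0 < (i0.castPred hlast).succ := by
      conv_lhs => rw [← Fin.castSucc_castPred i0 hlast]
      exact Fin.castSucc_lt_succ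
    exact absurd (lt_of_lt_of_le this hle) (lt_irrefl _)
  · rintro ⟨i, hx1, hx2⟩
    refine ⟨by rw [← h0]; exact le_trans (hp (Fin.zero_le _)) hx1,
      lt_of_lt_of_le hx2 (by rw [← h1]; exact hp (Fin.le_last _))⟩

lemma telescope {m : ℕ} (p : Fin (m + 1) → ℝ) :
    ∑ i : Fin m, (p i.succ - p i.castSucc) = p (Fin.last m) - p 0 := by
  classical
  set q : ℕ → ℝ := fun t => if h : t < m + 1 then p ⟨t, h⟩ else p (Fin.last m) with hq
  have e1 : ∀ i : Fin m, p i.succ - p i.castSucc = q (i.1 + 1) - q i.1 := by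
    intro i
    have h1 : i.1 + 1 < m + 1 := by omega
    have h2 : i.1 < m + 1 := by omega
    simp only [hq, dif_pos h1, dif_pos h2]
    congr 1 <;> exact congrArg p (Fin.ext rfl)
  have e2 : q m = p (Fin.last m) := by
    simp only [hq, dif_pos (by omega : m < m + 1)]
    exact congrArg p (Fin.ext rfl)
  have e3 : q 0 = p 0 := by
    simp only [hq, dif_pos (by omega : 0 < m + 1)]
    exact congrArg p (Fin.ext rfl)
  calc ∑ i : Fin m, (p i.succ - p i.castSucc)
      = ∑ i : Fin m, (q (i.1 + 1) - q i.1) := Finset.sum_congr rfl fun i _ => e1 i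
    _ = ∑ i ∈ Finset.range m, (q (i + 1) - q i) :=
        Fin.sum_univ_eq_sum_range (fun i => q (i + 1) - q i) m
    _ = q m - q 0 := Finset.sum_range_sub q m
    _ = _ := by rw [e2, e3]

lemma integral_pc {n m : ℕ} {p : Fin (m + 1) → ℝ} {v : Fin m → Fin n → ℝ}
    {F : ℝ → Fin n → ℝ} (h : IsPC p v F) (g : (Fin n → ℝ) → ℝ) :
    ∫ x in Set.Ico (0 : ℝ) 1, g (F x) =
      ∑ i : Fin m, (p i.succ - p i.castSucc) * g (v i) := by
  obtain ⟨hp, h0, h1, hpc⟩ := h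
  have hint : ∀ i : Fin m,
      IntegrableOn (fun x => g (F x)) (Set.Ico (p i.castSucc) (p i.succ)) volume := by
    intro i
    have hc : IntegrableOn (fun _ : ℝ => g (v i))
        (Set.Ico (p i.castSucc) (p i.succ)) volume :=
      integrableOn_const (by rw [Real.volume_Ico]; exact ENNReal.ofReal_ne_top)
    exact Integrable.congr hc ((ae_restrict_iff' measurableSet_Ico).2
      (Filter.Eventually.of_forall fun x hx => by simp only [hpc i x hx]))
  rw [cover hp h0 h1,
    integral_iUnion_fintype (fun i => measurableSet_Ico) (pieces_disjoint hp) hint]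
  refine Finset.sum_congr rfl fun i _ => ?_
  rw [setIntegral_congr_fun measurableSet_Ico
      (g := fun _ => g (v i)) (fun x hx => by rw [hpc i x hx]),
    setIntegral_const, measureReal_def, Real.volume_Ico,
    ENNReal.toReal_ofReal (sub_nonneg.2 (hp (Fin.castSucc_lt_succ (i := i)).le)), smul_eq_mul]

lemma isStep_of_pc {n m : ℕ} {p : Fin (m + 1) → ℝ} {v : Fin m → Fin n → ℝ}
    {F : ℝ → Fin n → ℝ} (h : IsPC p v F) (k : Fin n) :
    IsStepFunction (fun x => F x k) 0 1 := by
  obtain ⟨hp, h0, h1, hpc⟩ := h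
  refine ⟨m, fun i => v i k, fun i => p i.castSucc, fun i => p i.succ, fun i =>
    ⟨by rw [← h0]; exact hp (Fin.zero_le _), by rw [← h1]; exact hp (Fin.le_last _)⟩,
    fun x hx => ?_⟩
  have hx' := hx
  rw [cover hp h0 h1] at hx'
  obtain ⟨i0, hi0⟩ := Set.mem_iUnion.1 hx'
  show F x k = _
  rw [hpc i0 x hi0, Finset.sum_eq_single i0]
  · rw [Set.indicator_of_mem hi0]; ring
  · intro j _ hj
    rw [Set.indicator_of_notMem, mul_zero]
    exact fun hxj => Set.disjoint_left.1 (pieces_disjoint hp hj) hxj hi0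
  · intro hcon; exact absurd (Finset.mem_univ i0) hcon

/-- From step functions, a common piecewise constant representation. -/
lemma exists_pc_of_step {n : ℕ} (f : Fin n → ℝ → ℝ)
    (hf : ∀ k, IsStepFunction (f k) 0 1) :
    ∃ (m : ℕ) (p : Fin (m + 1) → ℝ) (v : Fin m → Fin n → ℝ),
      IsPC p v (fun x k => f k x) ∧
      ∀ i, ∃ x ∈ Set.Ico (0 : ℝ) 1, v i = fun k => f k x := by
  classical
  choose m c α β hαβ hrep using hf
  let E : Finset ℝ :=
    (Finset.univ : Finset (Σ k : Fin n, Fin (m k))).image (fun s => α s.1 s.2) ∪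
      (Finset.univ : Finset (Σ k : Fin n, Fin (m k))).image (fun s => β s.1 s.2)
  let T : Finset ℝ := insert 0 (insert 1 (E.filter (fun t => 0 ≤ t ∧ t ≤ 1)))
  have h0T : (0 : ℝ) ∈ T := Finset.mem_insert_self _ _
  have h1T : (1 : ℝ) ∈ T := Finset.mem_insert_of_mem (Finset.mem_insert_self _ _)
  have hTmem : ∀ t ∈ T, 0 ≤ t ∧ t ≤ 1 := by
    intro t ht
    rcases Finset.mem_insert.1 ht with h | h
    · subst h; exact ⟨le_rfl, zero_le_one⟩
    rcases Finset.mem_insert.1 h with h | h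
    · subst h; exact ⟨zero_le_one, le_rfl⟩
    · exact (Finset.mem_filter.1 h).2
  have hpos : 0 < T.card := Finset.card_pos.2 ⟨0, h0T⟩
  have hcard : T.card = (T.card - 1) + 1 := (Nat.succ_pred_eq_of_pos hpos).symm
  set M := T.card - 1 with hMdef
  let p : Fin (M + 1) → ℝ := fun i => T.orderEmbOfFin hcard i
  have hsm : StrictMono p := (T.orderEmbOfFin hcard).strictMono
  have hmono : Monotone p := hsm.monotone
  have hmemT : ∀ i, p i ∈ T := fun i => Finset.orderEmbOfFin_mem T hcard i
  have hp0 : p 0 = 0 := by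
    have h := Finset.orderEmbOfFin_zero hcard (Nat.succ_pos M)
    have hmin : T.min' ⟨0, h0T⟩ = 0 :=
      le_antisymm (Finset.min'_le _ _ h0T) (Finset.le_min' _ _ _ fun t ht => (hTmem t ht).1)
    calc p 0 = T.orderEmbOfFin hcard ⟨0, Nat.succ_pos M⟩ := rfl
      _ = T.min' _ := h
      _ = 0 := hmin
  have hp1 : p (Fin.last M) = 1 := by
    have h := Finset.orderEmbOfFin_last hcard (Nat.succ_pos M)
    have hmax : T.max' ⟨0, h0T⟩ = 1 :=
      le_antisymm (Finset.max'_le _ _ _ fun t ht => (hTmem t ht).2) (Finset.le_max' _ _ h1T)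
    calc p (Fin.last M) = T.orderEmbOfFin hcard ⟨(M + 1) - 1, Nat.sub_lt (Nat.succ_pos M) Nat.one_pos⟩ :=
          congrArg _ (Fin.ext rfl)
      _ = T.max' _ := h
      _ = 1 := hmax
  -- consecutiveness
  have hconsec : ∀ t ∈ T, ∀ i : Fin M, p i.castSucc < t → p i.succ ≤ t := by
    intro t ht i hit
    obtain ⟨j, hj⟩ : ∃ j, p j = t := by
      have : t ∈ Set.range (T.orderEmbOfFin hcard) := by
        rw [Finset.range_orderEmbOfFin]; exact_mod_cast ht
      exact this
    have h1 : i.castSucc < j := hsm.lt_iff_lt.1 (by rw [hj]; exact hit)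
    have h2 : i.succ ≤ j := by
      rw [Fin.le_def]
      rw [Fin.lt_def] at h1
      simpa using h1
    rw [← hj]
    exact hmono h2
  -- bounds of pieces
  have hbdlo : ∀ i : Fin M, (0:ℝ) ≤ p i.castSucc := fun i => by
    rw [← hp0]; exact hmono (Fin.zero_le _)
  have hbdhi : ∀ i : Fin M, p i.succ ≤ 1 := fun i => by
    rw [← hp1]; exact hmono (Fin.le_last _)
  have hylt : ∀ i : Fin M, p i.castSucc < 1 := fun i =>
    lt_of_lt_of_le (hsm (Fin.castSucc_lt_succ (i := i))) (hbdhi i)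
  -- constancy of f on pieces
  have hconst : ∀ i : Fin M, ∀ x ∈ Set.Ico (p i.castSucc) (p i.succ),
      ∀ k, f k x = f k (p i.castSucc) := by
    intro i x hx k
    set y := p i.castSucc with hy
    have hxI : x ∈ Set.Ico (0:ℝ) 1 :=
      ⟨le_trans (hbdlo i) hx.1, lt_of_lt_of_le hx.2 (hbdhi i)⟩
    have hyI : y ∈ Set.Ico (0:ℝ) 1 := ⟨hbdlo i, hylt i⟩
    rw [hrep k x hxI, hrep k y hyI]
    refine Finset.sum_congr rfl fun j _ => ?_
    congr 1
    have hαT : 0 ≤ α k j → α k j ≤ 1 → α k j ∈ T := by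
      intro h1 h2
      refine Finset.mem_insert_of_mem (Finset.mem_insert_of_mem (Finset.mem_filter.2 ⟨?_, h1, h2⟩))
      exact Finset.mem_union_left _ (Finset.mem_image.2 ⟨⟨k, j⟩, Finset.mem_univ _, rfl⟩)
    have hβT : 0 ≤ β k j → β k j ≤ 1 → β k j ∈ T := by
      intro h1 h2
      refine Finset.mem_insert_of_mem (Finset.mem_insert_of_mem (Finset.mem_filter.2 ⟨?_, h1, h2⟩))
      exact Finset.mem_union_right _ (Finset.mem_image.2 ⟨⟨k, j⟩, Finset.mem_univ _, rfl⟩)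
    have hc1 : α k j ≤ x ↔ α k j ≤ y := by
      rcases lt_or_ge (α k j) 0 with h | h
      · exact iff_of_true (le_trans h.le hxI.1) (le_trans h.le hyI.1)
      rcases le_or_gt (α k j) 1 with h' | h'
      · constructor
        · intro hax
          by_contra hcon
          push_neg at hcon
          have := hconsec _ (hαT h h') i hcon
          exact absurd (lt_of_le_of_lt (this.trans hax) hx.2) (lt_irrefl _)
        · intro hay; exact hay.trans hx.1
      · exact iff_of_false (fun hh => absurd (lt_of_le_of_lt hh hxI.2) (not_lt.2 h'.le))
          (fun hh => absurd (lt_of_le_of_lt hh hyI.2) (not_lt.2 h'.le))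
    have hc2 : x < β k j ↔ y < β k j := by
      rcases lt_or_ge (β k j) 0 with h | h
      · exact iff_of_false (fun hh => absurd (lt_of_le_of_lt hxI.1 hh) (not_lt.2 h.le))
          (fun hh => absurd (lt_of_le_of_lt hyI.1 hh) (not_lt.2 h.le))
      · constructor
        · intro hxb; exact lt_of_le_of_lt hx.1 hxb
        · intro hyb
          exact lt_of_lt_of_le hx.2 (hconsec _ (hβT h (hαβ k j).2) i hyb)
    by_cases hmem : x ∈ Set.Ico (α k j) (β k j)
    · rw [Set.mem_Ico] at hmem
      rw [Set.indicator_of_mem (Set.mem_Ico.2 hmem),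
        Set.indicator_of_mem (Set.mem_Ico.2 ⟨hc1.1 hmem.1, hc2.1 hmem.2⟩)]
    · rw [Set.indicator_of_notMem hmem, Set.indicator_of_notMem (fun hycon => by
        rw [Set.mem_Ico] at hycon
        exact hmem (Set.mem_Ico.2 ⟨hc1.2 hycon.1, hc2.2 hycon.2⟩))]
  refine ⟨M, p, fun i k => f k (p i.castSucc), ⟨hmono, hp0, hp1, ?_⟩, fun i =>
    ⟨p i.castSucc, ⟨hbdlo i, hylt i⟩, rfl⟩⟩
  intro i x hx
  funext k
  exact hconst i x hx k

/-- Build a piecewise-constant function from weights and values. -/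
lemma pc_of_weights {n M : ℕ} (w : Fin M → ℝ) (v : Fin M → Fin n → ℝ)
    (hw : ∀ i, 0 ≤ w i) (hsum : ∑ i, w i = 1) :
    ∃ (p : Fin (M + 1) → ℝ) (F : ℝ → Fin n → ℝ),
      IsPC p v F ∧ ∀ i, p i.succ - p i.castSucc = w i := by
  classical
  set p : Fin (M + 1) → ℝ :=
    fun j => ∑ l ∈ Finset.univ.filter (fun l : Fin M => (l : ℕ) < (j : ℕ)), w l with hp
  have hmono : Monotone p := by
    intro j j' hjj
    refine Finset.sum_le_sum_of_subset_of_nonneg ?_ fun i _ _ => hw i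
    intro l hl
    simp only [Finset.mem_filter, Finset.mem_univ, true_and] at hl ⊢
    exact lt_of_lt_of_le hl hjj
  have hp0 : p 0 = 0 := by
    have he : Finset.univ.filter (fun l : Fin M => (l : ℕ) < ((0 : Fin (M + 1)) : ℕ)) = ∅ := by
      ext l; simp
    rw [hp]
    simp only [he, Finset.sum_empty]
  have hp1 : p (Fin.last M) = 1 := by
    have he : Finset.univ.filter (fun l : Fin M => (l : ℕ) < ((Fin.last M : Fin (M + 1)) : ℕ)) =
        Finset.univ := by
      ext l; simp [l.isLt]
    rw [hp]
    simp only [he, hsum]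
  have hdiff : ∀ i : Fin M, p i.succ - p i.castSucc = w i := by
    intro i
    have hins : Finset.univ.filter (fun l : Fin M => (l : ℕ) < (i.succ : ℕ)) =
        insert i (Finset.univ.filter (fun l : Fin M => (l : ℕ) < (i.castSucc : ℕ))) := by
      ext l
      simp only [Finset.mem_filter, Finset.mem_univ, true_and, Finset.mem_insert,
        Fin.val_succ, Fin.coe_castSucc, Fin.ext_iff]
      omega
    rw [hp]
    simp only []
    rw [hins, Finset.sum_insert (by simp)]
    ring
  set F : ℝ → Fin n → ℝ := fun x =>
    if h : ∃ i : Fin M, x ∈ Set.Ico (p i.castSucc) (p i.succ) then v h.choose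
    else fun _ => 0 with hF
  refine ⟨p, F, ⟨hmono, hp0, hp1, ?_⟩, hdiff⟩
  intro i x hx
  have hex : ∃ i : Fin M, x ∈ Set.Ico (p i.castSucc) (p i.succ) := ⟨i, hx⟩
  have hch : hex.choose = i := by
    by_contra hne
    exact Set.disjoint_left.1 (pieces_disjoint hmono hne) hex.choose_spec hx
  rw [hF]
  simp only [dif_pos hex, hch]

/-- The discrete replacement lemma: process the first `j` coordinates. -/
lemma discrete {n : ℕ} (a b : Fin n → ℝ) (hab : ∀ k, a k < b k)
    (G : (Fin n → ℝ) → ℝ)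
    (hGconv : ∀ (k : Fin n) (x : Fin n → ℝ),
      ConvexOn ℝ Set.univ (fun t : ℝ => G (Function.update x k t)))
    (j : ℕ) :
    ∀ (ι : Type) (_ : Fintype ι) (w : ι → ℝ) (v : ι → Fin n → ℝ),
      (∀ i, 0 ≤ w i) → (∀ i k, a k ≤ v i k ∧ v i k ≤ b k) →
      ∃ (ι' : Type) (_ : Fintype ι') (w' : ι' → ℝ) (v' : ι' → Fin n → ℝ),
        (∀ i, 0 ≤ w' i) ∧ (∀ i k, a k ≤ v' i k ∧ v' i k ≤ b k) ∧
        (∀ (i : ι') (k : Fin n), (k : ℕ) < j → v' i k = a k ∨ v' i k = b k) ∧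
        (∀ A : Finset (Fin n),
          ∑ i, w' i * ∏ t ∈ A, v' i t = ∑ i, w i * ∏ t ∈ A, v i t) ∧
        ∑ i, w i * G (v i) ≤ ∑ i, w' i * G (v' i) := by
  classical
  induction j with
  | zero =>
    intro ι fι w v hw hv
    exact ⟨ι, fι, w, v, hw, hv, fun i k hk => absurd hk (by omega), fun A => rfl, le_rfl⟩
  | succ j ih =>
    intro ι fι w v hw hv
    obtain ⟨ι1, fι1, w1, v1, hw1, hv1, htwo1, hmom1, hG1⟩ := ih ι fι w v hw hv
    by_cases hj : j < n
    · set k0 : Fin n := ⟨j, hj⟩ with hk0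
      have hba : 0 < b k0 - a k0 := sub_pos.2 (hab k0)
      set lam : ι1 → ℝ := fun i => (b k0 - v1 i k0) / (b k0 - a k0) with hlam
      have hlam0 : ∀ i, 0 ≤ lam i := fun i =>
        div_nonneg (sub_nonneg.2 (hv1 i k0).2) hba.le
      have hlam1 : ∀ i, lam i ≤ 1 := fun i =>
        (div_le_one hba).2 (by have := (hv1 i k0).1; linarith)
      have hcombo : ∀ i, lam i * a k0 + (1 - lam i) * b k0 = v1 i k0 := by
        intro i
        rw [hlam]
        field_simp
        ring
      set w' : ι1 × Bool → ℝ := fun q => w1 q.1 * (cond q.2 (lam q.1) (1 - lam q.1))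
        with hw'
      set v' : ι1 × Bool → Fin n → ℝ := fun q =>
        Function.update (v1 q.1) k0 (cond q.2 (a k0) (b k0)) with hv'
      refine ⟨ι1 × Bool, inferInstance, w', v', ?_, ?_, ?_, ?_, ?_⟩
      · rintro ⟨i, e⟩
        cases e
        · exact mul_nonneg (hw1 i) (by simp [sub_nonneg, hlam1 i])
        · exact mul_nonneg (hw1 i) (by simp [hlam0 i])
      · rintro ⟨i, e⟩ k
        by_cases hk : k = k0
        · subst hk
          cases e
          · simp only [hv', Function.update_self, cond_false]
            exact ⟨(hab k0).le, le_rfl⟩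
          · simp only [hv', Function.update_self, cond_true]
            exact ⟨le_rfl, (hab k0).le⟩
        · simpa [hv', Function.update_of_ne hk] using hv1 i k
      · rintro ⟨i, e⟩ k hk
        by_cases hkk : k = k0
        · subst hkk
          cases e
          · right; simp [hv', Function.update_self]
          · left; simp [hv', Function.update_self]
        · have hkj : (k : ℕ) < j := by
            have : (k : ℕ) ≠ j := fun hc => hkk (Fin.ext (by simp [hc, hk0]))
            omega
          have := htwo1 i k hkj
          simpa [hv', Function.update_of_ne hkk] using this
      · intro A
        rw [← hmom1 A, Fintype.sum_prod_type]
        refine Finset.sum_congr rfl fun i _ => ?_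
        rw [Fintype.sum_bool]
        by_cases hA : k0 ∈ A
        · have hupa : ∏ t ∈ A, Function.update (v1 i) k0 (a k0) t =
              a k0 * ∏ t ∈ A.erase k0, v1 i t := by
            rw [Finset.prod_update_of_mem hA]
            congr 1
            exact Finset.prod_congr (Finset.sdiff_singleton_eq_erase k0 A) fun t ht => rfl
          have hupb : ∏ t ∈ A, Function.update (v1 i) k0 (b k0) t =
              b k0 * ∏ t ∈ A.erase k0, v1 i t := by
            rw [Finset.prod_update_of_mem hA]
            congr 1
            exact Finset.prod_congr (Finset.sdiff_singleton_eq_erase k0 A) fun t ht =>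
              rfl
          have hPA : ∏ t ∈ A, v1 i t = v1 i k0 * ∏ t ∈ A.erase k0, v1 i t :=
            (Finset.mul_prod_erase A _ hA).symm
          simp only [hw', hv', cond_true, cond_false]
          rw [hupa, hupb, hPA, ← hcombo i]
          ring
        · have hupa : ∀ (c : ℝ), ∏ t ∈ A, Function.update (v1 i) k0 c t =
              ∏ t ∈ A, v1 i t := by
            intro c
            refine Finset.prod_congr rfl fun t ht => ?_
            exact Function.update_of_ne (fun hc => hA (by rw [← hc]; exact ht)) _ _
          simp only [hw', hv', cond_true, cond_false]
          rw [hupa, hupa]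
          ring
      · refine le_trans hG1 ?_
        rw [Fintype.sum_prod_type]
        refine Finset.sum_le_sum fun i _ => ?_
        rw [Fintype.sum_bool]
        have hcv : G (Function.update (v1 i) k0 (lam i • a k0 + (1 - lam i) • b k0)) ≤
            lam i • G (Function.update (v1 i) k0 (a k0)) +
              (1 - lam i) • G (Function.update (v1 i) k0 (b k0)) :=
          (hGconv k0 (v1 i)).2 (Set.mem_univ (a k0)) (Set.mem_univ (b k0))
            (hlam0 i) (sub_nonneg.2 (hlam1 i)) (by ring)
        simp only [smul_eq_mul] at hcv
        rw [hcombo i, Function.update_eq_self] at hcv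
        have hle := mul_le_mul_of_nonneg_left hcv (hw1 i)
        simp only [hw', hv', cond_true, cond_false]
        calc w1 i * G (v1 i)
            ≤ w1 i * (lam i * G (Function.update (v1 i) k0 (a k0)) +
              (1 - lam i) * G (Function.update (v1 i) k0 (b k0))) := hle
          _ = w1 i * lam i * G (Function.update (v1 i) k0 (a k0)) +
              w1 i * (1 - lam i) * G (Function.update (v1 i) k0 (b k0)) := by ring
    · refine ⟨ι1, fι1, w1, v1, hw1, hv1, fun i k _ => htwo1 i k ?_, hmom1, hG1⟩
      exact lt_of_lt_of_le k.isLt (not_lt.1 hj)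

end TwoValuedAux

/-- Lemma 2.5 of the paper. Given step functions `f_k` on `[0,1)` with
`A_k ≤ f_k ≤ B_k`, `A_k < 0 < B_k`, and a function `G : ℝⁿ → [0,∞)` convex in each variable
separately, there exist `{A_k, B_k}`-valued step functions `ξ_k` on `[0,1)` with the same
mixed moments, `∫_0^1 ξ_{n_1} ⋯ ξ_{n_ν} = ∫_0^1 f_{n_1} ⋯ f_{n_ν}` for every nonempty
`{n_1, …, n_ν} ⊆ {1,…,n}`, and `∫_0^1 G(f_1, …, f_n) ≤ ∫_0^1 G(ξ_1, …, ξ_n)`. -/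
theorem two_valued_replacement
    (n : ℕ) (f : Fin n → ℝ → ℝ)
    (hf : ∀ k, IsStepFunction (f k) 0 1)
    (a b : Fin n → ℝ) (ha : ∀ k, a k < 0) (hb : ∀ k, 0 < b k)
    (hbound : ∀ k, ∀ x ∈ Set.Ico (0:ℝ) 1, a k ≤ f k x ∧ f k x ≤ b k)
    (G : (Fin n → ℝ) → ℝ) (hG0 : ∀ t, 0 ≤ G t)
    (hGconv : ∀ (k : Fin n) (x : Fin n → ℝ),
      ConvexOn ℝ Set.univ (fun t : ℝ => G (Function.update x k t))) :
    ∃ ξ : Fin n → ℝ → ℝ,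
      (∀ k, IsStepFunction (ξ k) 0 1) ∧
      (∀ k, ∀ x ∈ Set.Ico (0:ℝ) 1, ξ k x = a k ∨ ξ k x = b k) ∧
      (∀ A : Finset (Fin n), A.Nonempty →
        (∫ x in Set.Ico (0:ℝ) 1, ∏ j ∈ A, ξ j x) =
          (∫ x in Set.Ico (0:ℝ) 1, ∏ j ∈ A, f j x)) ∧
      (∫ x in Set.Ico (0:ℝ) 1, G (fun k => f k x)) ≤
        (∫ x in Set.Ico (0:ℝ) 1, G (fun k => ξ k x)) := by
  classical
  obtain ⟨m0, p0, v0, hpc0, hval0⟩ := TwoValuedAux.exists_pc_of_step f hf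
  set w0 : Fin m0 → ℝ := fun i => p0 i.succ - p0 i.castSucc with hw0
  have hw0nn : ∀ i, 0 ≤ w0 i := fun i => sub_nonneg.2 (hpc0.1 (Fin.castSucc_lt_succ (i := i)).le)
  have hw0sum : ∑ i, w0 i = 1 := by
    rw [hw0, TwoValuedAux.telescope p0, hpc0.2.2.1, hpc0.2.1, sub_zero]
  have hv0b : ∀ i k, a k ≤ v0 i k ∧ v0 i k ≤ b k := by
    intro i k
    obtain ⟨x, hx, hvx⟩ := hval0 i
    rw [hvx]
    exact hbound k x hx
  have hab : ∀ k, a k < b k := fun k => (ha k).trans (hb k)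
  obtain ⟨ι', fι', w', v', hw', hv'b, htwo, hmom, hGle⟩ :=
    TwoValuedAux.discrete a b hab G hGconv n (Fin m0) inferInstance w0 v0 hw0nn hv0b
  letI := fι'
  set M := Fintype.card ι' with hM
  let e : ι' ≃ Fin M := Fintype.equivFin ι'
  set w2 : Fin M → ℝ := fun i => w' (e.symm i) with hw2
  set v2 : Fin M → Fin n → ℝ := fun i => v' (e.symm i) with hv2
  have hsum2 : ∀ (g : ι' → ℝ), ∑ i, g (e.symm i) = ∑ i, g i :=
    fun g => Equiv.sum_comp e.symm g
  have hw2sum : ∑ i, w2 i = 1 := by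
    have h1 := hmom ∅
    simp only [Finset.prod_empty, mul_one] at h1
    calc ∑ i, w2 i = ∑ i, w' i := hsum2 w'
      _ = ∑ i, w0 i := h1
      _ = 1 := hw0sum
  obtain ⟨q, F', hpcF, hdiff⟩ :=
    TwoValuedAux.pc_of_weights w2 v2 (fun i => hw' _) hw2sum
  have hintF' : ∀ (g : (Fin n → ℝ) → ℝ),
      (∫ x in Set.Ico (0:ℝ) 1, g (F' x)) = ∑ i, w2 i * g (v2 i) := by
    intro g
    rw [TwoValuedAux.integral_pc hpcF g]
    exact Finset.sum_congr rfl fun i _ => by rw [hdiff i]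
  have hintF0 : ∀ (g : (Fin n → ℝ) → ℝ),
      (∫ x in Set.Ico (0:ℝ) 1, g (fun k => f k x)) = ∑ i, w0 i * g (v0 i) :=
    fun g => TwoValuedAux.integral_pc hpc0 g
  refine ⟨fun k x => F' x k, fun k => TwoValuedAux.isStep_of_pc hpcF k, ?_, ?_, ?_⟩
  · intro k x hx
    rw [TwoValuedAux.cover hpcF.1 hpcF.2.1 hpcF.2.2.1] at hx
    obtain ⟨i, hi⟩ := Set.mem_iUnion.1 hx
    show F' x k = a k ∨ F' x k = b k
    rw [hpcF.2.2.2 i x hi]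
    exact htwo (e.symm i) k k.isLt
  · intro A hA
    calc (∫ x in Set.Ico (0:ℝ) 1, ∏ j ∈ A, F' x j)
        = ∑ i, w2 i * ((fun t => ∏ j ∈ A, t j) (v2 i)) := hintF' (fun t => ∏ j ∈ A, t j)
      _ = ∑ i, w' i * ∏ j ∈ A, v' i j := hsum2 (fun i => w' i * ∏ j ∈ A, v' i j)
      _ = ∑ i, w0 i * ∏ j ∈ A, v0 i j := hmom A
      _ = (∫ x in Set.Ico (0:ℝ) 1, ∏ j ∈ A, f j x) :=
          (hintF0 (fun t => ∏ j ∈ A, t j)).symm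
  · calc (∫ x in Set.Ico (0:ℝ) 1, G (fun k => f k x))
        = ∑ i, w0 i * G (v0 i) := hintF0 G
      _ ≤ ∑ i, w' i * G (v' i) := hGle
      _ = ∑ i, w2 i * G (v2 i) := (hsum2 (fun i => w' i * G (v' i))).symm
      _ = (∫ x in Set.Ico (0:ℝ) 1, G (F' x)) := (hintF' G).symm
end

section
/- Let g_1, …, g_n be nonzero random variables such that each g_k takes exactly two values, and suppose the system is d-multiplicative, i.e. E[∏_{j∈A} g_j] = 0 for every nonempty subset A ⊆ {1,…,n} with #A ≤ d. Then the random variables g_1, …, g_n are d-independent: any d of them are mutually independent. -/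
open MeasureTheory ProbabilityTheory

/-- Lemma 2.4 of \[Kar4\]. A `d`-multiplicative system of nonzero random
variables `g_1, …, g_n`, each taking exactly two values, is `d`-independent: any `d` of the
`g_k` are mutually independent. -/
theorem two_valued_multiplicative_implies_independent
    {Ω : Type*} [MeasurableSpace Ω] (μ : Measure Ω) [IsProbabilityMeasure μ]
    (n d : ℕ) (hd : 0 < d) (hdn : d ≤ n)
    (g : Fin n → Ω → ℝ) (hgmeas : ∀ k, Measurable (g k))
    -- each `g_k` is a nonzero random variable taking exactly two values
    (hgne : ∀ k, ¬ (g k =ᵐ[μ] fun _ => (0 : ℝ)))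
    (hgval : ∀ k, ∃ u v : ℝ, u ≠ v ∧ (∀ ω, g k ω = u ∨ g k ω = v) ∧
      μ {ω | g k ω = u} ≠ 0 ∧ μ {ω | g k ω = v} ≠ 0)
    -- the system is `d`-multiplicative
    (hmult : ∀ A : Finset (Fin n), A.Nonempty → A.card ≤ d →
      ∫ ω, ∏ j ∈ A, g j ω ∂μ = 0) :
    ∀ S : Finset (Fin n), S.card ≤ d →
      iIndepFun (fun i : S => g i) μ := by
  classical
  intro S hS
  choose u v huv hval hu0 hv0 using hgval
  have huv' : ∀ k, u k - v k ≠ 0 := fun k => sub_ne_zero.mpr (huv k)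
  set A : Fin n → Set Ω := fun k => {ω | g k ω = u k} with hAdef
  have hAmeas : ∀ k, MeasurableSet (A k) := fun k => (hgmeas k) (measurableSet_singleton (u k))
  set b : Fin n → ℝ := fun k => -(v k) * (u k - v k)⁻¹ with hbdef
  set f : Fin n → Ω → ℝ := fun k ω => (u k - v k)⁻¹ * g k ω + b k with hfdef
  have hf_ind : ∀ k ω, f k ω = Set.indicator (A k) (fun _ => (1 : ℝ)) ω := by
    intro k ω
    rcases hval k ω with h | h
    · have hω : ω ∈ A k := h
      rw [Set.indicator_of_mem hω]
      simp only [hfdef, hbdef, h]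
      field_simp
      rw [← sub_eq_add_neg]
      exact div_self (huv' k)
    · have hω : ω ∉ A k := by
        simp only [hAdef, Set.mem_setOf_eq, h]
        exact fun he => huv k he.symm
      rw [Set.indicator_of_notMem hω]
      simp only [hfdef, hbdef, h]
      field_simp
      ring
  -- integrability of products of the g's
  have hgint : ∀ T : Finset (Fin n), Integrable (fun ω => ∏ k ∈ T, g k ω) μ := by
    intro T
    have hm : Measurable (fun ω => ∏ k ∈ T, g k ω) :=
      Finset.measurable_prod T (fun k _ => hgmeas k)
    refine (integrable_const (∏ k ∈ T, max |u k| |v k|)).mono'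
      hm.aestronglyMeasurable ?_
    refine Filter.Eventually.of_forall fun ω => ?_
    rw [Real.norm_eq_abs, Finset.abs_prod]
    refine Finset.prod_le_prod (fun k _ => abs_nonneg _) (fun k _ => ?_)
    rcases hval k ω with h | h <;> simp [h, le_max_left, le_max_right]
  have hgint1 : ∀ k, Integrable (g k) μ := by
    intro k
    have := hgint {k}
    simpa using this
  have hEg : ∀ k, ∫ ω, g k ω ∂μ = 0 := by
    intro k
    have := hmult {k} (Finset.singleton_nonempty k) (by simpa using Nat.succ_le_of_lt hd)
    simpa using this
  have hEf : ∀ k, ∫ ω, f k ω ∂μ = b k := by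
    intro k
    simp only [hfdef]
    rw [integral_add ((hgint1 k).const_mul _) (integrable_const _), integral_const_mul,
      hEg k, integral_const]
    simp
  have hmuA : ∀ k, (μ (A k)).toReal = b k := by
    intro k
    rw [← Measure.real_def, ← integral_indicator_one (hAmeas k), ← hEf k]
    exact integral_congr_ae (Filter.Eventually.of_forall fun ω => (hf_ind k ω).symm)
  -- the key factorization
  have key : ∀ T : Finset (Fin n), T.card ≤ d →
      μ (⋂ k ∈ T, A k) = ∏ k ∈ T, μ (A k) := by
    intro T hT
    have hTmeas : MeasurableSet (⋂ k ∈ T, A k) := T.measurableSet_biInter fun k _ => hAmeas k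
    have h1 : ∫ ω, ∏ k ∈ T, f k ω ∂μ = (μ (⋂ k ∈ T, A k)).toReal := by
      rw [← Measure.real_def, ← integral_indicator_one hTmeas]
      refine integral_congr_ae (Filter.Eventually.of_forall fun ω => ?_)
      by_cases hω : ω ∈ ⋂ k ∈ T, A k
      · have h1' : ∀ k ∈ T, f k ω = 1 := fun k hk => by
          rw [hf_ind k ω, Set.indicator_of_mem (Set.mem_iInter₂.mp hω k hk)]
        rw [Set.indicator_of_mem hω]
        exact Finset.prod_eq_one h1'
      · obtain ⟨k, hk, hωk⟩ : ∃ k ∈ T, ω ∉ A k := by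
          simpa [Set.mem_iInter] using hω
        rw [Set.indicator_of_notMem hω]
        exact Finset.prod_eq_zero hk
          (by rw [hf_ind k ω, Set.indicator_of_notMem hωk])
    have h2 : ∫ ω, ∏ k ∈ T, f k ω ∂μ = ∏ k ∈ T, b k := by
      have expand : ∀ ω, ∏ k ∈ T, f k ω =
          ∑ t ∈ T.powerset, ((∏ k ∈ t, (u k - v k)⁻¹) * ∏ k ∈ T \ t, b k) *
            ∏ k ∈ t, g k ω := by
        intro ω
        simp only [hfdef]
        rw [Finset.prod_add]
        refine Finset.sum_congr rfl fun t ht => ?_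
        rw [Finset.prod_mul_distrib]
        ring
      simp_rw [expand]
      rw [integral_finset_sum _ (fun t _ => ((hgint t).const_mul _))]
      rw [Finset.sum_eq_single (∅ : Finset (Fin n))]
      · simp
      · intro t ht hne
        rw [integral_const_mul,
          hmult t (Finset.nonempty_of_ne_empty hne)
            (le_trans (Finset.card_le_card (Finset.mem_powerset.mp ht)) hT),
          mul_zero]
      · intro h
        exact absurd (Finset.empty_mem_powerset T) h
    have h3 : (μ (⋂ k ∈ T, A k)).toReal = (∏ k ∈ T, μ (A k)).toReal := by
      rw [ENNReal.toReal_prod, ← h1, h2]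
      exact Finset.prod_congr rfl fun k _ => (hmuA k).symm
    exact (ENNReal.toReal_eq_toReal_iff' (measure_ne_top μ _)
      (ENNReal.prod_lt_top (fun k _ => measure_lt_top μ _)).ne).mp h3
  -- assemble the independence via the pi-system lemma
  rw [iIndepFun_iff_iIndep]
  refine iIndepSets.iIndep (fun i => (hgmeas (i : Fin n)).comap_le)
    (fun i : S => {A (i : Fin n)}) (fun i => ?_) (fun i => ?_) ?_
  · -- pi-system
    intro s hs t ht _
    rw [Set.mem_singleton_iff] at hs ht
    subst hs; subst ht
    simp [Set.mem_singleton_iff]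
  · -- generateFrom
    refine le_antisymm ?_ ?_
    · rintro t ⟨s, _, rfl⟩
      by_cases hu : u (i : Fin n) ∈ s <;> by_cases hv : v (i : Fin n) ∈ s
      · have h : g (i : Fin n) ⁻¹' s = Set.univ := by
          ext ω
          simp only [Set.mem_preimage, Set.mem_univ, iff_true]
          rcases hval (i : Fin n) ω with h | h <;> rw [h] <;> assumption
        rw [h]
        exact @MeasurableSet.univ Ω (MeasurableSpace.generateFrom _)
      · have h : g (i : Fin n) ⁻¹' s = A (i : Fin n) := by
          ext ω
          simp only [Set.mem_preimage, hAdef, Set.mem_setOf_eq]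
          constructor
          · intro hm
            rcases hval (i : Fin n) ω with h | h
            · exact h
            · exact absurd (h ▸ hm) hv
          · intro hm
            rw [hm]
            exact hu
        rw [h]
        exact MeasurableSpace.measurableSet_generateFrom rfl
      · have h : g (i : Fin n) ⁻¹' s = (A (i : Fin n))ᶜ := by
          ext ω
          simp only [Set.mem_preimage, Set.mem_compl_iff, hAdef, Set.mem_setOf_eq]
          constructor
          · intro hm he
            exact hu (he ▸ hm)
          · intro hm
            rcases hval (i : Fin n) ω with h | h
            · exact absurd h hm
            · rw [h]
              exact hv
        rw [h]
        exact (MeasurableSpace.measurableSet_generateFrom (Set.mem_singleton _)).compl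
      · have h : g (i : Fin n) ⁻¹' s = ∅ := by
          ext ω
          simp only [Set.mem_preimage, Set.mem_empty_iff_false, iff_false]
          intro hm
          rcases hval (i : Fin n) ω with h | h
          · exact hu (h ▸ hm)
          · exact hv (h ▸ hm)
        rw [h]
        exact @MeasurableSet.empty Ω (MeasurableSpace.generateFrom _)
    · refine MeasurableSpace.generateFrom_le ?_
      intro t ht
      rw [Set.mem_singleton_iff] at ht
      subst ht
      exact ⟨{u (i : Fin n)}, measurableSet_singleton _, rfl⟩
  · -- iIndepSets
    rw [iIndepSets_iff]
    intro t f' hf'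
    have hf'' : ∀ i ∈ t, f' i = A (i : Fin n) := fun i hi => hf' i hi
    set T : Finset (Fin n) := t.image (fun i : S => (i : Fin n)) with hTdef
    have hcard : T.card ≤ d := by
      rw [hTdef, Finset.card_image_of_injOn (fun a _ b _ h => Subtype.ext h)]
      calc t.card ≤ (Finset.univ : Finset S).card := Finset.card_le_univ t
        _ = S.card := by rw [Finset.card_univ, Fintype.card_coe]
        _ ≤ d := hS
    have hInter : (⋂ i ∈ t, f' i) = ⋂ k ∈ T, A k := by
      ext ω
      simp only [Set.mem_iInter, hTdef, Finset.mem_image]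
      constructor
      · rintro h k ⟨i, hi, rfl⟩
        rw [← hf'' i hi]
        exact h i hi
      · intro h i hi
        rw [hf'' i hi]
        exact h (i : Fin n) ⟨i, hi, rfl⟩
    have hProd : ∏ i ∈ t, μ (f' i) = ∏ k ∈ T, μ (A k) := by
      rw [hTdef, Finset.prod_image (fun a _ b _ h => Subtype.ext h)]
      exact Finset.prod_congr rfl fun i hi => by rw [hf'' i hi]
    rw [hInter, hProd, key T hcard]
end
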